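/- arXiv:2509.02717 — 6 statements merged into one kernel-verified Lean document; each statement's English description precedes it below -/
import Mathlib

section
/- Let G = (V, E) be a finite connected graph with n vertices, fix any initial configuration η₀ ∈ {0,1}^V, and let ω = (ω(k))_{k≥1} be i.i.d. uniform directed edges driving the discrete-time voter model (η_k)_{k≥0}. Define p_ℓ = (1/(2|E|)) · #{directed edges (i,j) : η_ℓ(i) ≠ η_ℓ(j)}. Then E[∑_{ℓ=0}^∞ p_ℓ] ≤ n²/4. -/
open MeasureTheory ProbabilityTheory
open scoped ENNReal Classical

/-- The voter-model update map. -/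
def voterUpd {V : Type*} [DecidableEq V] (e : V × V) (η : V → Bool) : V → Bool :=
  Function.update η e.2 (η e.1)

/-- The discrete-time voter model driven by `η0` and a sequence of directed edges. -/
def voterProc {V : Type*} [DecidableEq V] (η0 : V → Bool) (ω : ℕ → V × V) : ℕ → V → Bool
  | 0 => η0
  | k + 1 => voterUpd (ω k) (voterProc η0 ω k)

/-- Number of directed edges whose endpoints disagree. -/
def numDisagree {V : Type*} [Fintype V] [DecidableEq V]
    (G : SimpleGraph V) [DecidableRel G.Adj] (η : V → Bool) : ℕ :=
  (Finset.univ.filter fun e : V × V => G.Adj e.1 e.2 ∧ η e.1 ≠ η e.2).card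

section Aux

open Finset

variable {V : Type*} [Fintype V] [DecidableEq V]

/-- Number of `true` voters, as an integer. -/
private noncomputable def cntZ (η : V → Bool) : ℤ :=
  ∑ u : V, (if η u = true then (1 : ℤ) else 0)

/-- The potential function `X (n - X)`. -/
private noncomputable def gZ (η : V → Bool) : ℤ :=
  cntZ η * ((Fintype.card V : ℤ) - cntZ η)

private lemma cntZ_nonneg (η : V → Bool) : 0 ≤ cntZ η :=
  Finset.sum_nonneg fun _ _ => by split <;> norm_num

private lemma cntZ_le (η : V → Bool) : cntZ η ≤ (Fintype.card V : ℤ) := by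
  have : cntZ η ≤ ∑ _u : V, (1 : ℤ) :=
    Finset.sum_le_sum fun u _ => by split <;> norm_num
  simpa using this

private lemma gZ_nonneg (η : V → Bool) : 0 ≤ gZ η :=
  mul_nonneg (cntZ_nonneg η) (by linarith [cntZ_le η])

private lemma gZ_le (η : V → Bool) : 4 * gZ η ≤ (Fintype.card V : ℤ) ^ 2 := by
  have := sq_nonneg ((Fintype.card V : ℤ) - 2 * cntZ η)
  unfold gZ at *
  nlinarith

private lemma cntZ_update (η : V → Bool) (y : V) (b : Bool) :
    cntZ (Function.update η y b)
      = cntZ η + ((if b = true then (1 : ℤ) else 0) - (if η y = true then 1 else 0)) := by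
  have key : ∀ u : V, (if Function.update η y b u = true then (1 : ℤ) else 0)
      = (if η u = true then (1 : ℤ) else 0)
        + (if u = y then ((if b = true then (1 : ℤ) else 0) - (if η y = true then 1 else 0))
            else 0) := by
    intro u
    by_cases h : u = y
    · subst h
      simp only [Function.update_self, eq_self_iff_true, if_true]
      ring
    · simp [Function.update_of_ne h, h]
  unfold cntZ
  rw [Finset.sum_congr rfl fun u _ => key u, Finset.sum_add_distrib,
    Finset.sum_ite_eq' Finset.univ y, if_pos (Finset.mem_univ y)]

private lemma gZ_voterUpd (η : V → Bool) (e : V × V) :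
    gZ (voterUpd e η)
      = gZ η + ((if η e.1 = true then (1 : ℤ) else 0) - (if η e.2 = true then 1 else 0))
          * ((Fintype.card V : ℤ) - 2 * cntZ η)
        - (if η e.1 = η e.2 then 0 else 1) := by
  unfold gZ voterUpd
  rw [cntZ_update]
  cases h1 : η e.1 <;> cases h2 : η e.2 <;> simp only [h1, h2] <;> norm_num <;> ring

private lemma sum_fst_eq_sum_snd (G : SimpleGraph V) [DecidableRel G.Adj] (f : V → ℤ) :
    ∑ e ∈ Finset.univ.filter (fun e : V × V => G.Adj e.1 e.2), f e.1
      = ∑ e ∈ Finset.univ.filter (fun e : V × V => G.Adj e.1 e.2), f e.2 := by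
  refine Finset.sum_nbij' (fun e => (e.2, e.1)) (fun e => (e.2, e.1)) ?_ ?_ ?_ ?_ ?_ <;>
    simp [SimpleGraph.adj_comm]

/-- The key one-step identity: summing the potential over all possible updates. -/
private lemma sum_gZ_voterUpd (G : SimpleGraph V) [DecidableRel G.Adj] (η : V → Bool) :
    ∑ e : {e : V × V // G.Adj e.1 e.2}, gZ (voterUpd e.val η)
      = (Fintype.card {e : V × V // G.Adj e.1 e.2} : ℤ) * gZ η - (numDisagree G η : ℤ) := by
  classical
  rw [← Finset.sum_subtype (Finset.univ.filter (fun e : V × V => G.Adj e.1 e.2))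
      (fun e => by simp) (fun e => gZ (voterUpd e η))]
  simp only [gZ_voterUpd]
  rw [Finset.sum_sub_distrib, Finset.sum_add_distrib, ← Finset.sum_mul]
  have h1 : ∑ e ∈ Finset.univ.filter (fun e : V × V => G.Adj e.1 e.2),
      ((if η e.1 = true then (1 : ℤ) else 0) - (if η e.2 = true then 1 else 0)) = 0 := by
    rw [Finset.sum_sub_distrib,
      sum_fst_eq_sum_snd G (fun v => if η v = true then (1 : ℤ) else 0), sub_self]
  have h2 : ∑ _e ∈ Finset.univ.filter (fun e : V × V => G.Adj e.1 e.2), gZ η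
      = (Fintype.card {e : V × V // G.Adj e.1 e.2} : ℤ) * gZ η := by
    rw [Finset.sum_const, Fintype.card_subtype, nsmul_eq_mul]
  have h3 : ∑ e ∈ Finset.univ.filter (fun e : V × V => G.Adj e.1 e.2),
      (if η e.1 = η e.2 then (0 : ℤ) else 1) = (numDisagree G η : ℤ) := by
    rw [Finset.sum_ite, Finset.sum_const, Finset.sum_const, Finset.filter_filter,
      Finset.filter_filter]
    unfold numDisagree
    simp [Ne]
  rw [h1, h2, h3, zero_mul, add_zero]

private lemma voterProc_congr {W : Type*} [DecidableEq W] (η0 : W → Bool)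
    (ω ω' : ℕ → W × W) : ∀ m, (∀ k, k < m → ω k = ω' k) →
      voterProc η0 ω m = voterProc η0 ω' m
  | 0, _ => rfl
  | m + 1, h => by
    show voterUpd (ω m) (voterProc η0 ω m) = voterUpd (ω' m) (voterProc η0 ω' m)
    rw [voterProc_congr η0 ω ω' m (fun k hk => h k (by omega)), h m (by omega)]

/-- Extend a finite tuple to an infinite sequence. -/
private noncomputable def extSeq {α : Type*} [Nonempty α] (m : ℕ) (a : Fin m → α) :
    ℕ → α :=
  fun k => if h : k < m then a ⟨k, h⟩ else Classical.arbitrary α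

/-- The state of the voter process after `m` steps, as a function of the first `m` edges. -/
private noncomputable def stC {V : Type*} [DecidableEq V] {α : Type*} [Nonempty α]
    (f : α → V × V) (η0 : V → Bool) (m : ℕ) (a : Fin m → α) : V → Bool :=
  voterProc η0 (fun k => f (extSeq m a k)) m

private lemma stC_zero {V : Type*} [DecidableEq V] {α : Type*} [Nonempty α]
    (f : α → V × V) (η0 : V → Bool) (a : Fin 0 → α) : stC f η0 0 a = η0 := rfl

private lemma stC_snoc {V : Type*} [DecidableEq V] {α : Type*} [Nonempty α]
    (f : α → V × V) (η0 : V → Bool) (m : ℕ) (b : Fin m → α) (e : α) :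
    stC f η0 (m + 1) (Fin.snoc b e) = voterUpd (f e) (stC f η0 m b) := by
  unfold stC
  have h1 : extSeq (m+1) (Fin.snoc b e) m = e := by
    have hlast : (⟨m, Nat.lt_succ_self m⟩ : Fin (m+1)) = Fin.last m := rfl
    simp only [extSeq]
    rw [dif_pos (Nat.lt_succ_self m), hlast, Fin.snoc_last]
  have h2 : voterProc η0 (fun k => f (extSeq (m+1) (Fin.snoc b e) k)) m
      = voterProc η0 (fun k => f (extSeq m b k)) m := by
    apply voterProc_congr
    intro k hk
    congr 1
    simp only [extSeq]
    rw [dif_pos (by omega : k < m + 1), dif_pos hk]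
    have hcast : (⟨k, by omega⟩ : Fin (m+1)) = Fin.castSucc ⟨k, hk⟩ := rfl
    rw [hcast, Fin.snoc_castSucc]
  show voterUpd (f (extSeq (m + 1) (Fin.snoc b e) m))
      (voterProc η0 (fun k => f (extSeq (m+1) (Fin.snoc b e) k)) m) = _
  rw [h1, h2]

/-- Integration of a function of finitely many coordinates of an i.i.d. sequence. -/
private lemma lintegral_cyl {α : Type*} [Fintype α] [Nonempty α] [MeasurableSpace α]
    [MeasurableSingletonClass α]
    (μ : Measure (ℕ → α)) [IsProbabilityMeasure μ]
    (hindep : iIndepFun (fun k (ω : ℕ → α) => ω k) μ)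
    (c : ℝ≥0∞) (hunif : ∀ (k : ℕ) (e : α), μ {ω | ω k = e} = c)
    (m : ℕ) (ψ : (Fin m → α) → ℝ≥0∞) :
    Measurable (fun ω : ℕ → α => ψ (fun i => ω i)) ∧
      ∫⁻ ω, ψ (fun i => ω i) ∂μ = ∑ a : Fin m → α, ψ a * c ^ m := by
  classical
  set C : (Fin m → α) → Set (ℕ → α) := fun a => {ω | ∀ i : Fin m, ω (i : ℕ) = a i}
    with hCdef
  have hCmeas : ∀ a, MeasurableSet (C a) := by
    intro a
    have : C a = ⋂ i : Fin m, (fun ω : ℕ → α => ω (i : ℕ)) ⁻¹' {a i} := by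
      ext ω; simp [hCdef]
    rw [this]
    exact MeasurableSet.iInter fun i => (measurable_pi_apply _) (measurableSet_singleton _)
  have hCprob : ∀ a, μ (C a) = c ^ m := by
    intro a
    have h1 : C a = ⋂ k ∈ Finset.range m, {ω : ℕ → α | ω k = extSeq m a k} := by
      ext ω
      simp only [hCdef, Set.mem_setOf_eq, Set.mem_iInter, Finset.mem_range]
      constructor
      · intro h k hk
        simp only [extSeq]
        rw [dif_pos hk]
        exact h ⟨k, hk⟩
      · intro h i
        have hh := h (i : ℕ) i.isLt
        simp only [extSeq] at hh
        rw [dif_pos i.isLt, Fin.eta] at hh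
        exact hh
    rw [h1]
    have hmb := hindep.meas_biInter (S := Finset.range m)
      (s := fun k => {ω : ℕ → α | ω k = extSeq m a k})
      (fun k _ => ⟨{extSeq m a k}, measurableSet_singleton _, rfl⟩)
    rw [hmb]
    simp [hunif, Finset.prod_const]
  have hrep : (fun ω : ℕ → α => ψ (fun i => ω i))
      = fun ω => ∑ a : Fin m → α, (C a).indicator (fun _ => ψ a) ω := by
    funext ω
    rw [Finset.sum_eq_single (fun i : Fin m => ω (i : ℕ))]
    · rw [Set.indicator_of_mem]
      exact fun i => rfl
    · intro b _ hb
      rw [Set.indicator_of_notMem]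
      intro hmem
      exact hb (funext fun i => (hmem i).symm)
    · intro h
      exact absurd (Finset.mem_univ _) h
  constructor
  · rw [hrep]
    exact Finset.measurable_sum _ fun a _ => measurable_const.indicator (hCmeas a)
  · rw [hrep, lintegral_finset_sum _ fun a _ => measurable_const.indicator (hCmeas a)]
    exact Finset.sum_congr rfl fun a _ => by
      rw [lintegral_indicator_const (hCmeas a), hCprob a]

private lemma realStep {K g d : ℝ} (hK : K ≠ 0) (m : ℕ) :
    (K * g - d) * (1 / K) ^ (m + 1) + d / K * (1 / K) ^ m = g * (1 / K) ^ m := by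
  have h : K * (1 / K) = 1 := mul_one_div_cancel hK
  linear_combination (g * (1 / K) ^ m) * h

end Aux

/-- For the voter model on a finite connected graph with `n` vertices driven
by i.i.d. uniform directed edges, with `p_ℓ` the fraction of disagreeing directed edges at
time `ℓ`, one has `E[∑_{ℓ=0}^∞ p_ℓ] ≤ n²/4`. -/
theorem stmt8 {V : Type*} [Fintype V] [DecidableEq V]
    [MeasurableSpace V] [MeasurableSingletonClass V]
    (G : SimpleGraph V) [DecidableRel G.Adj] (hconn : G.Connected)
    (η0 : V → Bool)
    (μω : Measure (ℕ → {e : V × V // G.Adj e.1 e.2})) [IsProbabilityMeasure μω]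
    (hindep : iIndepFun (fun k ω => ω k) μω)
    (hunif : ∀ (k : ℕ) (e : {e : V × V // G.Adj e.1 e.2}),
      μω {ω | ω k = e} = (2 * G.edgeFinset.card : ℝ≥0∞)⁻¹) :
    ∫⁻ ω, (∑' ℓ : ℕ, ENNReal.ofReal
        ((numDisagree G (voterProc η0 (fun i => ((ω i : V × V))) ℓ) : ℝ)
          / (2 * G.edgeFinset.card))) ∂μω
      ≤ ENNReal.ofReal ((Fintype.card V : ℝ) ^ 2 / 4) := by
  classical
  by_cases hne : Nonempty {e : V × V // G.Adj e.1 e.2}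
  swap
  · -- degenerate case: no edges, so the sample space is empty, contradicting probability
    exfalso
    have hempty : (Set.univ : Set (ℕ → {e : V × V // G.Adj e.1 e.2})) = ∅ := by
      rw [Set.univ_eq_empty_iff]
      exact ⟨fun ω => hne ⟨ω 0⟩⟩
    have h1 : μω Set.univ = 1 := measure_univ
    rw [hempty, measure_empty] at h1
    exact zero_ne_one h1
  haveI := hne
  set K : ℕ := 2 * G.edgeFinset.card with hKdef
  have hMK : Fintype.card {e : V × V // G.Adj e.1 e.2} = K := by
    rw [Fintype.card_subtype, hKdef, SimpleGraph.two_mul_card_edgeFinset]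
  have hKpos : 0 < K := by
    rw [← hMK]; exact Fintype.card_pos
  have hKR : (0 : ℝ) < (K : ℝ) := by exact_mod_cast hKpos
  set c : ℝ≥0∞ := ((K : ℕ) : ℝ≥0∞)⁻¹ with hcdef
  have hunif' : ∀ (k : ℕ) (e : {e : V × V // G.Adj e.1 e.2}), μω {ω | ω k = e} = c := by
    intro k e
    rw [hunif k e, hcdef, hKdef]
    push_cast
    ring_nf
  set st : ∀ m : ℕ, (Fin m → {e : V × V // G.Adj e.1 e.2}) → V → Bool :=
    stC (Subtype.val) η0 with hstdef
  -- real-valued partial sums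
  set T : ℕ → ℝ := fun m => ∑ a : Fin m → {e : V × V // G.Adj e.1 e.2},
    (gZ (st m a) : ℝ) * (1 / (K : ℝ)) ^ m with hTdef
  set S : ℕ → ℝ := fun m => ∑ a : Fin m → {e : V × V // G.Adj e.1 e.2},
    ((numDisagree G (st m a) : ℝ) / (K : ℝ)) * (1 / (K : ℝ)) ^ m with hSdef
  have hA : ∀ η : V → Bool, ∑ e : {e : V × V // G.Adj e.1 e.2},
      ((gZ (voterUpd e.val η) : ℝ)) = (K : ℝ) * (gZ η : ℝ) - (numDisagree G η : ℝ) := by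
    intro η
    have := sum_gZ_voterUpd G η
    rw [hMK] at this
    exact_mod_cast congrArg (fun z : ℤ => (z : ℝ)) this
  have hrec : ∀ m : ℕ, T (m + 1) + S m = T m := by
    intro m
    have hre : T (m + 1) = ∑ p : {e : V × V // G.Adj e.1 e.2}
        × (Fin m → {e : V × V // G.Adj e.1 e.2}),
        (gZ (st (m+1) (Fin.snoc p.2 p.1)) : ℝ) * (1 / (K : ℝ)) ^ (m+1) := by
      rw [hTdef]
      exact (Equiv.sum_comp (Fin.snocEquiv (fun _ => {e : V × V // G.Adj e.1 e.2}))
        (fun a => (gZ (st (m+1) a) : ℝ) * (1 / (K : ℝ)) ^ (m+1))).symm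
    rw [hre, Fintype.sum_prod_type, Finset.sum_comm, hTdef, hSdef, ← Finset.sum_add_distrib]
    apply Finset.sum_congr rfl
    intro b _
    have hs : ∀ e : {e : V × V // G.Adj e.1 e.2},
        st (m+1) (Fin.snoc b e) = voterUpd e.val (st m b) := fun e => stC_snoc _ _ _ _ _
    calc (∑ e : {e : V × V // G.Adj e.1 e.2},
          (gZ (st (m+1) (Fin.snoc b e)) : ℝ) * (1 / (K : ℝ)) ^ (m+1))
          + ((numDisagree G (st m b) : ℝ) / (K : ℝ)) * (1 / (K : ℝ)) ^ m
        = (∑ e : {e : V × V // G.Adj e.1 e.2}, (gZ (voterUpd e.val (st m b)) : ℝ))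
            * (1 / (K : ℝ)) ^ (m+1)
          + ((numDisagree G (st m b) : ℝ) / (K : ℝ)) * (1 / (K : ℝ)) ^ m := by
          rw [← Finset.sum_mul]
          rw [Finset.sum_congr rfl (fun (e : {e : V × V // G.Adj e.1 e.2}) _ =>
            congrArg (fun x : V → Bool => ((gZ x : ℝ))) (hs e))]
      _ = (gZ (st m b) : ℝ) * (1 / (K : ℝ)) ^ m := by
          rw [hA (st m b)]
          exact realStep (ne_of_gt hKR) m
  have hpart : ∀ m : ℕ, ∑ ℓ ∈ Finset.range m, S ℓ = T 0 - T m := by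
    intro m
    induction m with
    | zero => simp
    | succ m ih =>
      rw [Finset.sum_range_succ, ih, ← hrec m]
      ring
  have hT0 : T 0 = (gZ η0 : ℝ) := by
    have h0 : T 0 = ∑ a : Fin 0 → {e : V × V // G.Adj e.1 e.2},
        (gZ (st 0 a) : ℝ) * (1 / (K : ℝ)) ^ 0 := rfl
    rw [h0, Fintype.sum_unique, hstdef, stC_zero, pow_zero, mul_one]
  have hTnn : ∀ m, 0 ≤ T m := by
    intro m
    apply Finset.sum_nonneg
    intro a _
    apply mul_nonneg
    · exact_mod_cast gZ_nonneg _
    · exact pow_nonneg (one_div_nonneg.mpr hKR.le) m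
  have hSnn : ∀ m, 0 ≤ S m := by
    intro m
    apply Finset.sum_nonneg
    intro a _
    exact mul_nonneg (div_nonneg (Nat.cast_nonneg _) hKR.le)
      (pow_nonneg (one_div_nonneg.mpr hKR.le) m)
  have hbound : ∀ m : ℕ, ∑ ℓ ∈ Finset.range m, S ℓ ≤ (Fintype.card V : ℝ) ^ 2 / 4 := by
    intro m
    rw [hpart m]
    have h4 : (gZ η0 : ℝ) ≤ (Fintype.card V : ℝ) ^ 2 / 4 := by
      have h5 : (4 * gZ η0 : ℝ) ≤ ((Fintype.card V : ℤ) ^ 2 : ℝ) := by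
        exact_mod_cast gZ_le η0
      push_cast at h5 ⊢
      linarith
    linarith [hTnn m, hT0 ▸ h4]
  -- now the measure-theoretic side
  set ψ : ∀ ℓ : ℕ, (Fin ℓ → {e : V × V // G.Adj e.1 e.2}) → ℝ≥0∞ :=
    fun ℓ a => ENNReal.ofReal ((numDisagree G (st ℓ a) : ℝ) / (2 * G.edgeFinset.card : ℝ))
    with hψdef
  have hrestr : ∀ (ℓ : ℕ) (ω : ℕ → {e : V × V // G.Adj e.1 e.2}),
      voterProc η0 (fun i => ((ω i : V × V))) ℓ = st ℓ (fun i : Fin ℓ => ω i) := by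
    intro ℓ ω
    rw [hstdef]
    unfold stC
    apply voterProc_congr
    intro k hk
    simp only [extSeq]
    rw [dif_pos hk]
  have hF : ∀ ℓ : ℕ, (fun ω : ℕ → {e : V × V // G.Adj e.1 e.2} =>
      ENNReal.ofReal ((numDisagree G (voterProc η0 (fun i => ((ω i : V × V))) ℓ) : ℝ)
        / (2 * G.edgeFinset.card)))
      = fun ω => ψ ℓ (fun i => ω i) := by
    intro ℓ
    funext ω
    rw [hψdef, hrestr ℓ ω]
  have hcyl := fun ℓ => lintegral_cyl μω hindep c hunif' ℓ (ψ ℓ)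
  calc ∫⁻ ω, (∑' ℓ : ℕ, ENNReal.ofReal
        ((numDisagree G (voterProc η0 (fun i => ((ω i : V × V))) ℓ) : ℝ)
          / (2 * G.edgeFinset.card))) ∂μω
      = ∑' ℓ : ℕ, ∫⁻ ω, ENNReal.ofReal
        ((numDisagree G (voterProc η0 (fun i => ((ω i : V × V))) ℓ) : ℝ)
          / (2 * G.edgeFinset.card)) ∂μω := by
        refine lintegral_tsum fun ℓ => ?_
        rw [hF ℓ]
        exact (hcyl ℓ).1.aemeasurable
    _ = ∑' ℓ : ℕ, ENNReal.ofReal (S ℓ) := by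
        refine tsum_congr fun ℓ => ?_
        have h1 : ∫⁻ ω, ENNReal.ofReal
            ((numDisagree G (voterProc η0 (fun i => ((ω i : V × V))) ℓ) : ℝ)
              / (2 * G.edgeFinset.card)) ∂μω
            = ∑ a : Fin ℓ → {e : V × V // G.Adj e.1 e.2}, ψ ℓ a * c ^ ℓ := by
          rw [show (fun ω : ℕ → {e : V × V // G.Adj e.1 e.2} => ENNReal.ofReal
            ((numDisagree G (voterProc η0 (fun i => ((ω i : V × V))) ℓ) : ℝ)
              / (2 * G.edgeFinset.card))) = fun ω => ψ ℓ (fun i => ω i) from hF ℓ]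
          exact (hcyl ℓ).2
        rw [h1, hSdef]
        rw [ENNReal.ofReal_sum_of_nonneg (fun a _ => mul_nonneg
          (div_nonneg (Nat.cast_nonneg _) hKR.le)
          (pow_nonneg (one_div_nonneg.mpr hKR.le) ℓ))]
        refine Finset.sum_congr rfl fun a _ => ?_
        rw [ENNReal.ofReal_mul (div_nonneg (Nat.cast_nonneg _) hKR.le)]
        congr 1
        · rw [hψdef]
          congr 1
          rw [hKdef]
          push_cast
          ring
        · rw [hcdef, ENNReal.ofReal_pow (one_div_nonneg.mpr hKR.le)]
          congr 1
          rw [one_div, ENNReal.ofReal_inv_of_pos hKR, ENNReal.ofReal_natCast]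
    _ ≤ ENNReal.ofReal ((Fintype.card V : ℝ) ^ 2 / 4) := by
        refine Summable.tsum_le_of_sum_le ENNReal.summable fun s => ?_
        obtain ⟨m, hm⟩ : ∃ m, s ⊆ Finset.range m :=
          ⟨(s.sup id) + 1, fun i hi => Finset.mem_range.mpr
            (Nat.lt_succ_of_le (Finset.le_sup (f := id) hi))⟩
        calc ∑ ℓ ∈ s, ENNReal.ofReal (S ℓ)
            ≤ ∑ ℓ ∈ Finset.range m, ENNReal.ofReal (S ℓ) :=
              Finset.sum_le_sum_of_subset hm
          _ = ENNReal.ofReal (∑ ℓ ∈ Finset.range m, S ℓ) :=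
              (ENNReal.ofReal_sum_of_nonneg fun ℓ _ => hSnn ℓ).symm
          _ ≤ ENNReal.ofReal ((Fintype.card V : ℝ) ^ 2 / 4) := by
              exact ENNReal.ofReal_le_ofReal (hbound m)
end

section
/- Let G = (V, E) be a finite connected graph with n vertices and maximum degree Δ. Let η₀ ∈ {0,1}^V have i.i.d. Bernoulli(p) entries for some p ∈ (0,1), independent of an i.i.d. sequence ω = (ω(k))_{k≥1} of uniform directed edges, and let f(η₀, ω) ∈ {0,1} denote the consensus opinion of the discrete-time voter model driven by (η₀, ω). For ℓ ≥ 1, let ω_{ℓ↔ℓ+1} denote the sequence obtained from ω by swapping its ℓ-th and (ℓ+1)-th entries. Then ∑_{ℓ=1}^∞ P(f(η₀, ω) ≠ f(η₀, ω_{ℓ↔ℓ+1})) ≤ 3nΔ/|E|. -/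
open MeasureTheory ProbabilityTheory
open scoped ENNReal Classical

/-- The consensus opinion of the voter model: `true` iff the all-ones configuration is
eventually reached (the all-ones state is absorbing; on a finite connected graph, driven by
i.i.d. uniform edges, some constant configuration is a.s. eventually reached, so this a.s.
coincides with the eventual constant value). -/
noncomputable def consensus {V : Type*} [DecidableEq V]
    (η0 : V → Bool) (ω : ℕ → V × V) : Bool :=
  if ∃ k : ℕ, ∀ v : V, voterProc η0 ω k v = true then true else false

/-- The sequence obtained from `ω` by swapping its `ℓ`-th and `(ℓ+1)`-th entries. -/
def swapSeq {E : Type*} (ℓ : ℕ) (ω : ℕ → E) : ℕ → E :=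
  ω ∘ (Equiv.swap ℓ (ℓ + 1))

namespace Stmt9

variable {V : Type*} [DecidableEq V]

/-- number of `true` opinions -/
def cnt [Fintype V] (c : V → Bool) : ℕ := (Finset.univ.filter (fun v => c v = true)).card

lemma cnt_le [Fintype V] (c : V → Bool) : cnt c ≤ Fintype.card V :=
  Finset.card_filter_le _ _

lemma cnt_update_true [Fintype V] (c : V → Bool) (y : V) (hy : c y = false) :
    cnt (Function.update c y true) = cnt c + 1 := by
  classical
  unfold cnt
  have : (Finset.univ.filter (fun v => Function.update c y true v = true))
      = insert y (Finset.univ.filter (fun v => c v = true)) := by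
    ext v
    by_cases hv : v = y <;>
      simp [Function.update, hv, hy]
  rw [this, Finset.card_insert_of_notMem (by simp [hy])]

lemma cnt_update_false [Fintype V] (c : V → Bool) (y : V) (hy : c y = true) :
    cnt (Function.update c y false) + 1 = cnt c := by
  classical
  unfold cnt
  have : (Finset.univ.filter (fun v => Function.update c y false v = true))
      = (Finset.univ.filter (fun v => c v = true)).erase y := by
    ext v
    by_cases hv : v = y <;>
      simp [Function.update, hv]
  rw [this, Finset.card_erase_add_one (by simp [hy])]

lemma cnt_pos_of_true [Fintype V] {c : V → Bool} {v : V} (h : c v = true) : 0 < cnt c := by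
  refine Finset.card_pos.2 ⟨v, ?_⟩
  simp [h]

lemma cnt_eq_card_iff [Fintype V] (c : V → Bool) :
    cnt c = Fintype.card V ↔ ∀ v, c v = true := by
  unfold cnt
  rw [← Finset.card_univ]
  constructor
  · intro h v
    have huniv := Finset.eq_univ_of_card _ h
    have hv : v ∈ Finset.univ.filter (fun v => c v = true) := by rw [huniv]; simp
    simpa using hv
  · intro h
    congr 1
    ext v; simp [h v]

lemma cnt_eq_zero_iff [Fintype V] (c : V → Bool) :
    cnt c = 0 ↔ ∀ v, c v = false := by
  unfold cnt
  rw [Finset.card_eq_zero, Finset.filter_eq_empty_iff]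
  constructor
  · intro h v
    simpa using h (Finset.mem_univ v)
  · intro h v _
    simp [h v]

/-- update with same values keeps config -/
lemma voterUpd_eq_self (e : V × V) (c : V → Bool) (h : c e.1 = c e.2) :
    voterUpd e c = c := by
  unfold voterUpd
  rw [h, Function.update_eq_self]

lemma voterUpd_apply (e : V × V) (c : V → Bool) (v : V) :
    voterUpd e c v = if v = e.2 then c e.1 else c v := by
  unfold voterUpd
  by_cases h : v = e.2 <;> simp [Function.update, h]

lemma voterUpd_allTrue (e : V × V) (c : V → Bool) (h : ∀ v, c v = true) (v : V) :
    voterUpd e c v = true := by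
  rw [voterUpd_apply]
  split <;> apply h

lemma voterProc_allTrue (c : V → Bool) (ω : ℕ → V × V) {k k' : ℕ} (hk : k ≤ k')
    (h : ∀ v, voterProc c ω k v = true) : ∀ v, voterProc c ω k' v = true := by
  induction k' with
  | zero => exact (Nat.le_zero.mp hk ▸ h)
  | succ m ih =>
    rcases Nat.lt_or_ge k (m+1) with hlt | hge
    · have := ih (Nat.lt_succ_iff.mp hlt)
      intro v
      exact voterUpd_allTrue _ _ this v
    · have : k = m + 1 := le_antisymm hk hge
      exact this ▸ h

lemma voterProc_congr (c : V → Bool) (ω ω' : ℕ → V × V) (k : ℕ)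
    (h : ∀ i < k, ω i = ω' i) : voterProc c ω k = voterProc c ω' k := by
  induction k with
  | zero => rfl
  | succ m ih =>
    show voterUpd (ω m) _ = voterUpd (ω' m) _
    rw [ih (fun i hi => h i (hi.trans (Nat.lt_succ_self m))), h m (Nat.lt_succ_self m)]

lemma voterProc_add (c : V → Bool) (ω : ℕ → V × V) (a s : ℕ) :
    voterProc c ω (a + s) = voterProc (voterProc c ω a) (fun i => ω (a + i)) s := by
  induction s with
  | zero => rfl
  | succ m ih =>
    show voterUpd (ω (a + m)) (voterProc c ω (a + m)) =
      voterUpd (ω (a + m)) (voterProc (voterProc c ω a) (fun i => ω (a + i)) m)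
    rw [ih]

/-- xor coupling -/
lemma voterUpd_xor (e : V × V) (c d : V → Bool) :
    (fun v => xor (voterUpd e c v) (voterUpd e d v)) = voterUpd e (fun v => xor (c v) (d v)) := by
  funext v
  simp only [voterUpd_apply]
  by_cases h : v = e.2 <;> simp [h]

lemma voterProc_xor (c d : V → Bool) (ω : ℕ → V × V) (k : ℕ) :
    (fun v => xor (voterProc c ω k v) (voterProc d ω k v))
      = voterProc (fun v => xor (c v) (d v)) ω k := by
  induction k with
  | zero => rfl
  | succ m ih => rw [show voterProc c ω (m+1) = voterUpd (ω m) (voterProc c ω m) from rfl,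
      show voterProc d ω (m+1) = voterUpd (ω m) (voterProc d ω m) from rfl,
      show voterProc _ ω (m+1) = voterUpd (ω m) (voterProc _ ω m) from rfl,
      voterUpd_xor, ih]

lemma consensus_true_iff (c : V → Bool) (ω : ℕ → V × V) :
    consensus c ω = true ↔ ∃ k, ∀ v, voterProc c ω k v = true := by
  unfold consensus
  split <;> simp_all

lemma consensus_congr_tail (c c' : V → Bool) (ω ω' : ℕ → V × V) (J : ℕ)
    (hcfg : voterProc c ω J = voterProc c' ω' J)
    (hω : ∀ i, J ≤ i → ω i = ω' i) :
    consensus c ω = consensus c' ω' := by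
  have hall : ∀ s, voterProc c ω (J + s) = voterProc c' ω' (J + s) := by
    intro s
    rw [voterProc_add, voterProc_add, hcfg]
    exact voterProc_congr _ _ _ _ (fun i _ => hω (J + i) (Nat.le_add_right _ _))
  have key : (∃ k, ∀ v, voterProc c ω k v = true) ↔
      (∃ k, ∀ v, voterProc c' ω' k v = true) := by
    constructor
    · rintro ⟨k, hk⟩
      refine ⟨J + k, ?_⟩
      rw [← hall k]
      exact voterProc_allTrue _ _ (Nat.le_add_left _ _) hk
    · rintro ⟨k, hk⟩
      refine ⟨J + k, ?_⟩
      rw [hall k]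
      exact voterProc_allTrue _ _ (Nat.le_add_left _ _) hk
  unfold consensus
  by_cases h : ∃ k, ∀ v, voterProc c ω k v = true
  · rw [if_pos h, if_pos (key.mp h)]
  · rw [if_neg h, if_neg (fun h' => h (key.mpr h'))]

/-- The core deterministic double-update lemma. -/
lemma double_upd (ξ : V → Bool) (e f : V × V) (he : e.1 ≠ e.2) (hf : f.1 ≠ f.2)
    (hne : voterUpd f (voterUpd e ξ) ≠ voterUpd e (voterUpd f ξ)) :
    (f.2 = e.2 ∨ f.1 = e.2 ∨ f.2 = e.1) ∧ (ξ e.1 ≠ ξ e.2 ∨ ξ f.1 ≠ ξ f.2) ∧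
    (∀ z, z ≠ e.2 → z ≠ f.2 → voterUpd f (voterUpd e ξ) z = voterUpd e (voterUpd f ξ) z) := by
  have hoff : ∀ z, z ≠ e.2 → z ≠ f.2 →
      voterUpd f (voterUpd e ξ) z = voterUpd e (voterUpd f ξ) z := by
    intro z hz1 hz2
    simp [voterUpd_apply, hz1, hz2]
  obtain ⟨z, hz⟩ := Function.ne_iff.mp hne
  have main : (f.2 = e.2 ∨ f.1 = e.2 ∨ f.2 = e.1) ∧ (ξ e.1 ≠ ξ e.2 ∨ ξ f.1 ≠ ξ f.2) := by
    by_cases hz1 : z = e.2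
    · subst hz1
      by_cases h22 : e.2 = f.2
      · -- both heads equal
        have hA : voterUpd f (voterUpd e ξ) e.2 = ξ f.1 := by
          simp [voterUpd_apply, h22, hf]
        have hB : voterUpd e (voterUpd f ξ) e.2 = ξ e.1 := by
          simp [voterUpd_apply, ← h22, he]
        rw [hA, hB] at hz
        refine ⟨Or.inl h22.symm, ?_⟩
        by_cases hd : ξ e.1 = ξ e.2
        · refine Or.inr (fun hcon => hz ?_)
          rw [hcon, ← h22, ← hd]
        · exact Or.inl hd
      · -- z = e.2, e.2 ≠ f.2
        have hA : voterUpd f (voterUpd e ξ) e.2 = ξ e.1 := by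
          have h22' : e.2 ≠ f.2 := h22
          simp [voterUpd_apply, h22', Ne.symm he]
        have hB : voterUpd e (voterUpd f ξ) e.2 =
            (if e.1 = f.2 then ξ f.1 else ξ e.1) := by
          simp [voterUpd_apply]
        rw [hA, hB] at hz
        by_cases h1 : e.1 = f.2
        · rw [if_pos h1] at hz
          refine ⟨Or.inr (Or.inr h1.symm), Or.inr (fun hcon => hz ?_)⟩
          rw [← h1] at hcon
          exact hcon.symm
        · rw [if_neg h1] at hz
          exact absurd rfl hz
    · by_cases hz2 : z = f.2
      · subst hz2
        have hA : voterUpd f (voterUpd e ξ) f.2 =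
            (if f.1 = e.2 then ξ e.1 else ξ f.1) := by
          simp [voterUpd_apply]
        have hB : voterUpd e (voterUpd f ξ) f.2 = ξ f.1 := by
          simp [voterUpd_apply, hz1, Ne.symm hf]
        rw [hA, hB] at hz
        by_cases h1 : f.1 = e.2
        · rw [if_pos h1] at hz
          refine ⟨Or.inr (Or.inl h1), Or.inl (fun hcon => hz ?_)⟩
          rw [hcon, ← h1]
        · rw [if_neg h1] at hz
          exact absurd rfl hz
      · exact absurd (hoff z hz1 hz2) hz
  exact ⟨main.1, main.2, hoff⟩


/-- apply a finite word of updates (last entry applied last) -/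
def runW (c : V → Bool) : {k : ℕ} → (Fin k → V × V) → (V → Bool)
  | 0, _ => c
  | _+1, w => voterUpd (w (Fin.last _)) (runW c (w ∘ Fin.castSucc))

lemma runW_eq (c : V → Bool) (ω : ℕ → V × V) (k : ℕ) :
    runW c (fun i : Fin k => ω i) = voterProc c ω k := by
  induction k with
  | zero => rfl
  | succ m ih =>
    show voterUpd (ω m) (runW c ((fun i : Fin (m+1) => ω i) ∘ Fin.castSucc))
        = voterUpd (ω m) (voterProc c ω m)
    congr 1

lemma runW_zero (c : V → Bool) (w : Fin 0 → V × V) : runW c w = c := rfl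

lemma runW_snoc (c : V → Bool) {k : ℕ} (w : Fin k → V × V) (e : V × V) :
    runW c (Fin.snoc w e) = voterUpd e (runW c w) := by
  have h0 : runW c (Fin.snoc w e)
      = voterUpd ((Fin.snoc w e : Fin (k+1) → V × V) (Fin.last k))
          (runW c ((Fin.snoc w e : Fin (k+1) → V × V) ∘ Fin.castSucc)) := rfl
  rw [h0, Fin.snoc_last]
  congr 1
  funext i
  simp [Function.comp, Fin.snoc_castSucc]

section Graph

variable [Fintype V] (G : SimpleGraph V) [DecidableRel G.Adj]

/-- directed edges -/
abbrev DE := {e : V × V // G.Adj e.1 e.2}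

lemma card_DE : Fintype.card (DE G) = 2 * G.edgeFinset.card := by
  rw [← SimpleGraph.dart_card_eq_twice_card_edges]
  exact (Fintype.card_congr ⟨fun d => ⟨d.toProd, d.adj⟩,
    fun e => ⟨e.1, e.2⟩, fun d => rfl, fun e => rfl⟩).symm

/-- edge reversal -/
def revE : DE G ≃ DE G where
  toFun e := ⟨(e.1.2, e.1.1), e.2.symm⟩
  invFun e := ⟨(e.1.2, e.1.1), e.2.symm⟩
  left_inv e := Subtype.ext (Prod.mk.eta)
  right_inv e := Subtype.ext (Prod.mk.eta)

variable {G}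

lemma cnt_upd_pair (ξ : V → Bool) (e : DE G) :
    cnt (voterUpd e.1 ξ) + cnt (voterUpd ((revE G) e).1 ξ) = 2 * cnt ξ := by
  have hne : e.1.1 ≠ e.1.2 := G.ne_of_adj e.2
  have hrev : ((revE G) e).1 = (e.1.2, e.1.1) := rfl
  rw [hrev]
  cases ha : ξ e.1.1 <;> cases hb : ξ e.1.2
  · rw [voterUpd_eq_self _ _ (ha.trans hb.symm),
      voterUpd_eq_self (e.1.2, e.1.1) _ (hb.trans ha.symm)]
    omega
  · -- a false, b true
    have h1 : cnt (voterUpd e.1 ξ) + 1 = cnt ξ := by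
      show cnt (Function.update ξ e.1.2 (ξ e.1.1)) + 1 = cnt ξ
      rw [ha]; exact cnt_update_false ξ e.1.2 hb
    have h2 : cnt (voterUpd (e.1.2, e.1.1) ξ) = cnt ξ + 1 := by
      show cnt (Function.update ξ e.1.1 (ξ e.1.2)) = cnt ξ + 1
      rw [hb]; exact cnt_update_true ξ e.1.1 ha
    omega
  · -- a true, b false
    have h1 : cnt (voterUpd e.1 ξ) = cnt ξ + 1 := by
      show cnt (Function.update ξ e.1.2 (ξ e.1.1)) = cnt ξ + 1
      rw [ha]; exact cnt_update_true ξ e.1.2 hb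
    have h2 : cnt (voterUpd (e.1.2, e.1.1) ξ) + 1 = cnt ξ := by
      show cnt (Function.update ξ e.1.1 (ξ e.1.2)) + 1 = cnt ξ
      rw [hb]; exact cnt_update_false ξ e.1.1 ha
    omega
  · rw [voterUpd_eq_self _ _ (ha.trans hb.symm),
      voterUpd_eq_self (e.1.2, e.1.1) _ (hb.trans ha.symm)]
    omega

lemma cnt_upd_pair_sq (ξ : V → Bool) (e : DE G) :
    cnt (voterUpd e.1 ξ) ^ 2 + cnt (voterUpd ((revE G) e).1 ξ) ^ 2
      = 2 * cnt ξ ^ 2 + 2 * (if ξ e.1.1 ≠ ξ e.1.2 then 1 else 0) := by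
  have hne : e.1.1 ≠ e.1.2 := G.ne_of_adj e.2
  have hrev : ((revE G) e).1 = (e.1.2, e.1.1) := rfl
  rw [hrev]
  cases ha : ξ e.1.1 <;> cases hb : ξ e.1.2
  · rw [voterUpd_eq_self _ _ (ha.trans hb.symm),
      voterUpd_eq_self (e.1.2, e.1.1) _ (hb.trans ha.symm),
      if_neg (by simp [ha, hb])]
    ring
  · have h1 : cnt (voterUpd e.1 ξ) + 1 = cnt ξ := by
      show cnt (Function.update ξ e.1.2 (ξ e.1.1)) + 1 = cnt ξ
      rw [ha]; exact cnt_update_false ξ e.1.2 hb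
    have h2 : cnt (voterUpd (e.1.2, e.1.1) ξ) = cnt ξ + 1 := by
      show cnt (Function.update ξ e.1.1 (ξ e.1.2)) = cnt ξ + 1
      rw [hb]; exact cnt_update_true ξ e.1.1 ha
    rw [if_pos (by simp [ha, hb])]
    nlinarith [h1, h2]
  · have h1 : cnt (voterUpd e.1 ξ) = cnt ξ + 1 := by
      show cnt (Function.update ξ e.1.2 (ξ e.1.1)) = cnt ξ + 1
      rw [ha]; exact cnt_update_true ξ e.1.2 hb
    have h2 : cnt (voterUpd (e.1.2, e.1.1) ξ) + 1 = cnt ξ := by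
      show cnt (Function.update ξ e.1.1 (ξ e.1.2)) + 1 = cnt ξ
      rw [hb]; exact cnt_update_false ξ e.1.1 ha
    rw [if_pos (by simp [ha, hb])]
    nlinarith [h1, h2]
  · rw [voterUpd_eq_self _ _ (ha.trans hb.symm),
      voterUpd_eq_self (e.1.2, e.1.1) _ (hb.trans ha.symm),
      if_neg (by simp [ha, hb])]
    ring

/-- number of discordant directed edges -/
def dcnt (ξ : V → Bool) : ℕ := (Finset.univ.filter (fun e : DE G => ξ e.1.1 ≠ ξ e.1.2)).card

lemma sum_cnt_upd (ξ : V → Bool) :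
    ∑ e : DE G, cnt (voterUpd e.1 ξ) = Fintype.card (DE G) * cnt ξ := by
  have hdouble : 2 * ∑ e : DE G, cnt (voterUpd e.1 ξ)
      = 2 * (Fintype.card (DE G) * cnt ξ) := by
    have hrw : ∑ e : DE G, cnt (voterUpd e.1 ξ)
        = ∑ e : DE G, cnt (voterUpd ((revE G) e).1 ξ) :=
      (Equiv.sum_comp (revE G) (fun e => cnt (voterUpd e.1 ξ))).symm
    calc 2 * ∑ e : DE G, cnt (voterUpd e.1 ξ)
        = (∑ e : DE G, cnt (voterUpd e.1 ξ)) + ∑ e : DE G, cnt (voterUpd ((revE G) e).1 ξ) := by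
          rw [← hrw]; ring
      _ = ∑ e : DE G, (cnt (voterUpd e.1 ξ) + cnt (voterUpd ((revE G) e).1 ξ)) := by
          rw [Finset.sum_add_distrib]
      _ = ∑ _e : DE G, 2 * cnt ξ := Finset.sum_congr rfl (fun e _ => cnt_upd_pair ξ e)
      _ = Fintype.card (DE G) * (2 * cnt ξ) := by
          rw [Finset.sum_const, Finset.card_univ, smul_eq_mul]
      _ = 2 * (Fintype.card (DE G) * cnt ξ) := by ring
  omega

lemma sum_cnt_upd_sq (ξ : V → Bool) :
    ∑ e : DE G, cnt (voterUpd e.1 ξ) ^ 2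
      = Fintype.card (DE G) * cnt ξ ^ 2 + dcnt (G := G) ξ := by
  have hrw : ∑ e : DE G, cnt (voterUpd e.1 ξ) ^ 2
      = ∑ e : DE G, cnt (voterUpd ((revE G) e).1 ξ) ^ 2 :=
    (Equiv.sum_comp (revE G) (fun e => cnt (voterUpd e.1 ξ) ^ 2)).symm
  have hind : ∑ e : DE G, (if ξ e.1.1 ≠ ξ e.1.2 then 1 else 0) = dcnt (G := G) ξ :=
    (Finset.card_filter _ _).symm
  have hdouble : 2 * ∑ e : DE G, cnt (voterUpd e.1 ξ) ^ 2
      = 2 * (Fintype.card (DE G) * cnt ξ ^ 2 + dcnt (G := G) ξ) := by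
    calc 2 * ∑ e : DE G, cnt (voterUpd e.1 ξ) ^ 2
        = (∑ e : DE G, cnt (voterUpd e.1 ξ) ^ 2)
            + ∑ e : DE G, cnt (voterUpd ((revE G) e).1 ξ) ^ 2 := by rw [← hrw]; ring
      _ = ∑ e : DE G, (cnt (voterUpd e.1 ξ) ^ 2 + cnt (voterUpd ((revE G) e).1 ξ) ^ 2) := by
          rw [Finset.sum_add_distrib]
      _ = ∑ e : DE G, (2 * cnt ξ ^ 2 + 2 * (if ξ e.1.1 ≠ ξ e.1.2 then 1 else 0)) :=
          Finset.sum_congr rfl (fun e _ => cnt_upd_pair_sq ξ e)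
      _ = 2 * (Fintype.card (DE G) * cnt ξ ^ 2 + dcnt (G := G) ξ) := by
          rw [Finset.sum_add_distrib, Finset.sum_const, Finset.card_univ, smul_eq_mul,
            ← Finset.mul_sum, hind]
          ring
  omega

variable (G)

/-- sum over words of squared count -/
def sumSq (c : V → Bool) (k : ℕ) : ℕ :=
  ∑ w : Fin k → DE G, cnt (runW c (fun i => (w i).1)) ^ 2

def sumD (c : V → Bool) (k : ℕ) : ℕ :=
  ∑ w : Fin k → DE G, dcnt (G := G) (runW c (fun i => (w i).1))

def sumM (c : V → Bool) (k : ℕ) : ℕ :=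
  ∑ w : Fin k → DE G, cnt (runW c (fun i => (w i).1))

lemma snoc_val {k : ℕ} (p : Fin k → DE G) (e : DE G) :
    (fun i => (((Fin.snocEquiv (fun _ => DE G)) (e, p)) i).1)
      = Fin.snoc (fun i => (p i).1) e.1 := by
  funext i
  refine Fin.lastCases ?_ ?_ i
  · simp [Fin.snocEquiv, Fin.snoc_last]
  · intro j
    simp [Fin.snocEquiv, Fin.snoc_castSucc]

lemma sum_words_succ (c : V → Bool) (k : ℕ) (F : (V → Bool) → ℕ) :
    ∑ w : Fin (k+1) → DE G, F (runW c (fun i => (w i).1))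
      = ∑ p : Fin k → DE G, ∑ e : DE G, F (voterUpd e.1 (runW c (fun i => (p i).1))) := by
  rw [← Equiv.sum_comp (Fin.snocEquiv (fun _ => DE G))
    (fun w => F (runW c (fun i => (w i).1)))]
  rw [Fintype.sum_prod_type]
  rw [Finset.sum_comm]
  refine Finset.sum_congr rfl (fun p _ => Finset.sum_congr rfl (fun e _ => ?_))
  rw [snoc_val, runW_snoc]

lemma sumM_succ (c : V → Bool) (k : ℕ) :
    sumM G c (k+1) = Fintype.card (DE G) * sumM G c k := by
  rw [sumM, sum_words_succ G c k (fun x => cnt x)]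
  rw [show sumM G c k = ∑ p : Fin k → DE G, cnt (runW c (fun i => (p i).1)) from rfl,
    Finset.mul_sum]
  exact Finset.sum_congr rfl (fun p _ => sum_cnt_upd _)

lemma sumM_eq (c : V → Bool) (k : ℕ) :
    sumM G c k = Fintype.card (DE G) ^ k * cnt c := by
  induction k with
  | zero => simp [sumM, runW_zero]
  | succ m ih => rw [sumM_succ, ih, pow_succ]; ring

lemma sumSq_succ (c : V → Bool) (k : ℕ) :
    sumSq G c (k+1) = Fintype.card (DE G) * sumSq G c k + sumD G c k := by
  rw [sumSq, sum_words_succ G c k (fun x => cnt x ^ 2)]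
  rw [show sumSq G c k = ∑ p : Fin k → DE G, cnt (runW c (fun i => (p i).1)) ^ 2 from rfl,
    show sumD G c k = ∑ p : Fin k → DE G, dcnt (G := G) (runW c (fun i => (p i).1)) from rfl,
    Finset.mul_sum, ← Finset.sum_add_distrib]
  exact Finset.sum_congr rfl (fun p _ => sum_cnt_upd_sq _)

lemma sumSq_formula (c : V → Bool) (K : ℕ) :
    sumSq G c K = Fintype.card (DE G) ^ K * cnt c ^ 2
      + ∑ ℓ ∈ Finset.range K, Fintype.card (DE G) ^ (K - 1 - ℓ) * sumD G c ℓ := by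
  induction K with
  | zero => simp [sumSq, runW_zero]
  | succ m ih =>
    rw [sumSq_succ, ih, Finset.sum_range_succ]
    rw [Nat.mul_add, Finset.mul_sum]
    have h1 : ∀ ℓ ∈ Finset.range m,
        Fintype.card (DE G) * (Fintype.card (DE G) ^ (m - 1 - ℓ) * sumD G c ℓ)
          = Fintype.card (DE G) ^ (m + 1 - 1 - ℓ) * sumD G c ℓ := by
      intro ℓ hℓ
      have hlt : ℓ < m := Finset.mem_range.mp hℓ
      rw [← mul_assoc, ← pow_succ']
      congr 2
      omega
    rw [Finset.sum_congr rfl h1]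
    have h2 : Fintype.card (DE G) ^ (m + 1 - 1 - m) = 1 := by
      rw [show m + 1 - 1 - m = 0 by omega, pow_zero]
    rw [h2, one_mul, pow_succ]
    ring

lemma sumSq_le (c : V → Bool) (k : ℕ) :
    sumSq G c k ≤ Fintype.card V * sumM G c k := by
  rw [sumSq, sumM, Finset.mul_sum]
  refine Finset.sum_le_sum (fun w _ => ?_)
  rw [pow_two]
  exact Nat.mul_le_mul_right _ (cnt_le _)

lemma key_nat (c : V → Bool) (K : ℕ) :
    4 * ∑ ℓ ∈ Finset.range K, Fintype.card (DE G) ^ (K - 1 - ℓ) * sumD G c ℓ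
      ≤ Fintype.card (DE G) ^ K * Fintype.card V ^ 2 := by
  set T := Fintype.card (DE G)
  set n := Fintype.card V
  set S0 := cnt c
  have hS0 : S0 ≤ n := cnt_le c
  have h1 : T ^ K * S0 ^ 2 + ∑ ℓ ∈ Finset.range K, T ^ (K - 1 - ℓ) * sumD G c ℓ
      = sumSq G c K := (sumSq_formula G c K).symm
  have h2 : sumSq G c K ≤ n * (T ^ K * S0) := by
    have := sumSq_le G c K
    rwa [sumM_eq] at this
  have h3 : 4 * (n * S0) ≤ n ^ 2 + 4 * S0 ^ 2 := by
    have hz : 4 * ((n:ℤ) * S0) ≤ (n:ℤ) ^ 2 + 4 * (S0:ℤ) ^ 2 := by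
      nlinarith [sq_nonneg ((n:ℤ) - 2 * S0)]
    exact_mod_cast hz
  have h4 : T ^ K * (4 * (n * S0)) ≤ T ^ K * (n ^ 2 + 4 * S0 ^ 2) :=
    Nat.mul_le_mul_left _ h3
  have h5 : 4 * sumSq G c K ≤ T ^ K * (4 * (n * S0)) := by
    calc 4 * sumSq G c K ≤ 4 * (n * (T ^ K * S0)) := Nat.mul_le_mul_left _ h2
      _ = T ^ K * (4 * (n * S0)) := by ring
  have h6 : 4 * (T ^ K * S0 ^ 2) + 4 * ∑ ℓ ∈ Finset.range K, T ^ (K - 1 - ℓ) * sumD G c ℓ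
      = 4 * sumSq G c K := by rw [← h1]; ring
  have h7 : T ^ K * (n ^ 2 + 4 * S0 ^ 2)
      = T ^ K * n ^ 2 + 4 * (T ^ K * S0 ^ 2) := by ring
  omega

/-- directed edges with given head -/
lemma card_head_le (u : V) :
    (Finset.univ.filter (fun e : DE G => e.1.2 = u)).card ≤ G.maxDegree := by
  have h1 : (Finset.univ.filter (fun e : DE G => e.1.2 = u)).card
      ≤ (G.neighborFinset u).card := by
    refine Finset.card_le_card_of_injOn (fun e => e.1.1) ?_ ?_
    · intro e he
      rw [Finset.mem_coe, Finset.mem_filter] at he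
      rw [Finset.mem_coe, SimpleGraph.mem_neighborFinset]
      exact (he.2 ▸ e.2).symm
    · intro e he e' he' heq
      rw [Finset.coe_filter, Set.mem_setOf_eq] at he he'
      refine Subtype.ext (Prod.ext heq ?_)
      rw [he.2, he'.2]
  rw [SimpleGraph.card_neighborFinset_eq_degree] at h1
  exact h1.trans (G.degree_le_maxDegree u)

lemma card_tail_le (u : V) :
    (Finset.univ.filter (fun e : DE G => e.1.1 = u)).card ≤ G.maxDegree := by
  have h1 : (Finset.univ.filter (fun e : DE G => e.1.1 = u)).card
      ≤ (G.neighborFinset u).card := by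
    refine Finset.card_le_card_of_injOn (fun e => e.1.2) ?_ ?_
    · intro e he
      rw [Finset.mem_coe, Finset.mem_filter] at he
      rw [Finset.mem_coe, SimpleGraph.mem_neighborFinset]
      exact he.2 ▸ e.2
    · intro e he e' he' heq
      rw [Finset.coe_filter, Set.mem_setOf_eq] at he he'
      refine Subtype.ext (Prod.ext ?_ heq)
      rw [he.2, he'.2]
  rw [SimpleGraph.card_neighborFinset_eq_degree] at h1
  exact h1.trans (G.degree_le_maxDegree u)

/-- interaction relation between ordered pairs of directed edges -/
def Interact (e f : DE G) : Prop := f.1.2 = e.1.2 ∨ f.1.1 = e.1.2 ∨ f.1.2 = e.1.1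

lemma card_interact_le (e : DE G) :
    (Finset.univ.filter (fun f => Interact G e f)).card ≤ 3 * G.maxDegree := by
  have hsub : Finset.univ.filter (fun f => Interact G e f)
      ⊆ (Finset.univ.filter (fun f : DE G => f.1.2 = e.1.2))
        ∪ ((Finset.univ.filter (fun f : DE G => f.1.1 = e.1.2))
          ∪ (Finset.univ.filter (fun f : DE G => f.1.2 = e.1.1))) := by
    intro f hf
    rw [Finset.mem_filter] at hf
    rcases hf.2 with h | h | h
    · exact Finset.mem_union_left _ (by simp [h])
    · exact Finset.mem_union_right _ (Finset.mem_union_left _ (by simp [h]))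
    · exact Finset.mem_union_right _ (Finset.mem_union_right _ (by simp [h]))
  calc (Finset.univ.filter (fun f => Interact G e f)).card
      ≤ _ := Finset.card_le_card hsub
    _ ≤ _ + _ := Finset.card_union_le _ _
    _ ≤ G.maxDegree + ((Finset.univ.filter (fun f : DE G => f.1.1 = e.1.2))
          ∪ (Finset.univ.filter (fun f : DE G => f.1.2 = e.1.1))).card := by
        exact Nat.add_le_add_right (card_head_le G e.1.2) _
    _ ≤ G.maxDegree + (G.maxDegree + G.maxDegree) := by
        refine Nat.add_le_add_left ((Finset.card_union_le _ _).trans ?_) _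
        exact Nat.add_le_add (card_tail_le G e.1.2) (card_head_le G e.1.1)
    _ = 3 * G.maxDegree := by ring

lemma card_interact_le' (f : DE G) :
    (Finset.univ.filter (fun e => Interact G e f)).card ≤ 3 * G.maxDegree := by
  have hsub : Finset.univ.filter (fun e => Interact G e f)
      ⊆ (Finset.univ.filter (fun e : DE G => e.1.2 = f.1.2))
        ∪ ((Finset.univ.filter (fun e : DE G => e.1.2 = f.1.1))
          ∪ (Finset.univ.filter (fun e : DE G => e.1.1 = f.1.2))) := by
    intro e he
    rw [Finset.mem_filter] at he
    rcases he.2 with h | h | h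
    · exact Finset.mem_union_left _ (by simp [h])
    · exact Finset.mem_union_right _ (Finset.mem_union_left _ (by simp [h]))
    · exact Finset.mem_union_right _ (Finset.mem_union_right _ (by simp [h]))
  calc (Finset.univ.filter (fun e => Interact G e f)).card
      ≤ _ := Finset.card_le_card hsub
    _ ≤ _ + _ := Finset.card_union_le _ _
    _ ≤ G.maxDegree + ((Finset.univ.filter (fun e : DE G => e.1.2 = f.1.1))
          ∪ (Finset.univ.filter (fun e : DE G => e.1.1 = f.1.2))).card := by
        exact Nat.add_le_add_right (card_head_le G f.1.2) _
    _ ≤ G.maxDegree + (G.maxDegree + G.maxDegree) := by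
        refine Nat.add_le_add_left ((Finset.card_union_le _ _).trans ?_) _
        exact Nat.add_le_add (card_head_le G f.1.1) (card_tail_le G f.1.2)
    _ = 3 * G.maxDegree := by ring

lemma card_pairs_le (ξ : V → Bool) :
    (Finset.univ.filter (fun p : DE G × DE G =>
        Interact G p.1 p.2 ∧ (ξ p.1.1.1 ≠ ξ p.1.1.2 ∨ ξ p.2.1.1 ≠ ξ p.2.1.2))).card
      ≤ 6 * G.maxDegree * dcnt (G := G) ξ := by
  classical
  set A := Finset.univ.filter (fun p : DE G × DE G =>
      (ξ p.1.1.1 ≠ ξ p.1.1.2) ∧ Interact G p.1 p.2) with hA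
  set B := Finset.univ.filter (fun p : DE G × DE G =>
      (ξ p.2.1.1 ≠ ξ p.2.1.2) ∧ Interact G p.1 p.2) with hB
  have hsub : Finset.univ.filter (fun p : DE G × DE G =>
      Interact G p.1 p.2 ∧ (ξ p.1.1.1 ≠ ξ p.1.1.2 ∨ ξ p.2.1.1 ≠ ξ p.2.1.2)) ⊆ A ∪ B := by
    intro p hp
    rw [Finset.mem_filter] at hp
    rcases hp.2.2 with h | h
    · exact Finset.mem_union_left _ (by simp [hA, h, hp.2.1])
    · exact Finset.mem_union_right _ (by simp [hB, h, hp.2.1])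
  have hAcard : A.card ≤ dcnt (G := G) ξ * (3 * G.maxDegree) := by
    have hfib := Finset.card_eq_sum_card_fiberwise (f := Prod.fst) (s := A)
      (t := Finset.univ.filter (fun e : DE G => ξ e.1.1 ≠ ξ e.1.2))
      (fun p hp => by
        rw [hA, Finset.mem_coe, Finset.mem_filter] at hp
        simp [hp.2.1])
    rw [hfib]
    refine (Finset.sum_le_sum (fun e _ => ?_)).trans
      (le_of_eq (by rw [Finset.sum_const, smul_eq_mul, dcnt]))
    refine (Finset.card_le_card_of_injOn (fun p => p.2) ?_ ?_).trans (card_interact_le G e)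
    · intro p hp
      rw [Finset.mem_coe, Finset.mem_filter, hA, Finset.mem_filter] at hp
      rcases hp with ⟨⟨_, _, hint⟩, hfst⟩
      rw [Finset.mem_coe, Finset.mem_filter]
      exact ⟨Finset.mem_univ _, hfst ▸ hint⟩
    · intro p hp p' hp' heq
      rw [Finset.coe_filter, Set.mem_setOf_eq] at hp hp'
      exact Prod.ext (hp.2.trans hp'.2.symm) heq
  have hBcard : B.card ≤ dcnt (G := G) ξ * (3 * G.maxDegree) := by
    have hfib := Finset.card_eq_sum_card_fiberwise (f := Prod.snd) (s := B)
      (t := Finset.univ.filter (fun e : DE G => ξ e.1.1 ≠ ξ e.1.2))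
      (fun p hp => by
        rw [hB, Finset.mem_coe, Finset.mem_filter] at hp
        simp [hp.2.1])
    rw [hfib]
    refine (Finset.sum_le_sum (fun f _ => ?_)).trans
      (le_of_eq (by rw [Finset.sum_const, smul_eq_mul, dcnt]))
    refine (Finset.card_le_card_of_injOn (fun p => p.1) ?_ ?_).trans (card_interact_le' G f)
    · intro p hp
      rw [Finset.mem_coe, Finset.mem_filter, hB, Finset.mem_filter] at hp
      rcases hp with ⟨⟨_, _, hint⟩, hsnd⟩
      rw [Finset.mem_coe, Finset.mem_filter]
      exact ⟨Finset.mem_univ _, hsnd ▸ hint⟩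
    · intro p hp p' hp' heq
      rw [Finset.coe_filter, Set.mem_setOf_eq] at hp hp'
      exact Prod.ext heq (hp.2.trans hp'.2.symm)
  calc (Finset.univ.filter (fun p : DE G × DE G =>
        Interact G p.1 p.2 ∧ (ξ p.1.1.1 ≠ ξ p.1.1.2 ∨ ξ p.2.1.1 ≠ ξ p.2.1.2))).card
      ≤ (A ∪ B).card := Finset.card_le_card hsub
    _ ≤ A.card + B.card := Finset.card_union_le _ _
    _ ≤ dcnt (G := G) ξ * (3 * G.maxDegree) + dcnt (G := G) ξ * (3 * G.maxDegree) :=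
        Nat.add_le_add hAcard hBcard
    _ = 6 * G.maxDegree * dcnt (G := G) ξ := by ring

lemma snoc_val' {k : ℕ} (p : Fin k → DE G) (e : DE G) :
    (fun i => ((Fin.snoc p e : Fin (k+1) → DE G) i).1)
      = Fin.snoc (fun i => (p i).1) e.1 := by
  funext i
  refine Fin.lastCases ?_ ?_ i
  · simp [Fin.snoc_last]
  · intro j
    simp [Fin.snoc_castSucc]

lemma cross_of_walk (s : Finset V) :
    ∀ {a b : V}, G.Walk a b → a ∈ s → b ∉ s → ∃ x ∈ s, ∃ y, y ∉ s ∧ G.Adj x y := by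
  intro a b w
  induction w with
  | nil => intro ha hb; exact absurd ha hb
  | @cons u v c huv p ih =>
    intro ha hb
    by_cases hv : v ∈ s
    · exact ih hv hb
    · exact ⟨u, ha, v, hv, huv⟩

/-- a word of updates that copies the value at `r` to all of `s` and changes nothing else -/
def Reaches (s : Finset V) : Prop :=
  ∃ (k : ℕ) (u : Fin k → DE G) (r : V), r ∈ s ∧
    ∀ ξ : V → Bool, runW ξ (fun i => (u i).1) = fun v => if v ∈ s then ξ r else ξ v

lemma reaches_singleton (r : V) : Reaches G {r} := by
  refine ⟨0, fun i => i.elim0, r, Finset.mem_singleton_self r, fun ξ => ?_⟩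
  rw [runW_zero]
  funext v
  by_cases hv : v = r <;> simp [hv]

lemma reaches_insert (s : Finset V) (hre : Reaches G s) (a b : V)
    (ha : a ∈ s) (hb : b ∉ s) (hadj : G.Adj a b) : Reaches G (insert b s) := by
  obtain ⟨k, u, r, hr, hrun⟩ := hre
  refine ⟨k+1, Fin.snoc u ⟨(a, b), hadj⟩, r, Finset.mem_insert_of_mem hr, fun ξ => ?_⟩
  rw [snoc_val', runW_snoc, hrun ξ]
  funext v
  rw [voterUpd_apply]
  by_cases hvb : v = b
  · simp only [hvb, if_pos rfl]
    simp [ha, Finset.mem_insert]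
  · simp only [show ((a, b).2 : V) = b from rfl, if_neg hvb]
    by_cases hvs : v ∈ s
    · simp [Finset.mem_insert, hvs]
    · have : v ∉ insert b s := by
        simp [Finset.mem_insert, hvb, hvs]
      simp [hvs, this]

lemma reaches_univ (hconn : G.Connected) [Nonempty V] :
    Reaches G (Finset.univ : Finset V) := by
  have main : ∀ (j : ℕ) (s : Finset V), (Finset.univ \ s).card = j → s.Nonempty →
      Reaches G s → Reaches G (Finset.univ : Finset V) := by
    intro j
    induction j with
    | zero =>
      intro s hcard _ hre
      have huniv : s = Finset.univ := by
        have := Finset.card_eq_zero.mp hcard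
        have hsub := Finset.sdiff_eq_empty_iff_subset.mp this
        exact Finset.univ_subset_iff.mp hsub
      rwa [huniv] at hre
    | succ m ih =>
      intro s hcard hne hre
      have hex : ∃ b, b ∉ s := by
        have hpos : 0 < (Finset.univ \ s).card := by omega
        obtain ⟨b, hb⟩ := Finset.card_pos.mp hpos
        exact ⟨b, (Finset.mem_sdiff.mp hb).2⟩
      obtain ⟨a0, ha0⟩ := hne
      obtain ⟨b0, hb0⟩ := hex
      obtain ⟨w⟩ := hconn a0 b0
      obtain ⟨a, has, b, hbs, hadj⟩ := cross_of_walk G s w ha0 hb0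
      refine ih (insert b s) ?_ ⟨a, Finset.mem_insert_of_mem has⟩
        (reaches_insert G s hre a b has hbs hadj)
      have h1 : Finset.univ \ insert b s = (Finset.univ \ s).erase b := by
        ext x
        simp only [Finset.mem_sdiff, Finset.mem_erase, Finset.mem_insert, Finset.mem_univ,
          true_and]
        tauto
      rw [h1, Finset.card_erase_of_mem (by simp [Finset.mem_sdiff, hbs]), hcard]
      omega
  obtain ⟨r⟩ := (inferInstance : Nonempty V)
  exact main _ {r} rfl ⟨r, Finset.mem_singleton_self r⟩ (reaches_singleton G r)

lemma exists_word (hconn : G.Connected) (hne : Nonempty (DE G)) :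
    ∃ (L : ℕ) (u : Fin L → DE G), 0 < L ∧
      ∀ ξ : V → Bool, ∃ b, runW ξ (fun i => (u i).1) = fun _ => b := by
  have hV : Nonempty V := ⟨hne.some.1.1⟩
  obtain ⟨k, u, r, _, hrun⟩ := reaches_univ G hconn
  obtain ⟨e0⟩ := hne
  refine ⟨k+1, Fin.snoc u e0, Nat.succ_pos k, fun ξ => ⟨ξ r, ?_⟩⟩
  rw [snoc_val', runW_snoc, hrun ξ]
  have hconst : (fun v => if v ∈ (Finset.univ : Finset V) then ξ r else ξ v)
      = fun _ => ξ r := by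
    funext v; simp
  rw [hconst]
  exact voterUpd_eq_self _ _ rfl

end Graph

section Measure

variable [Fintype V] [MeasurableSpace V] [MeasurableSingletonClass V]
variable (G : SimpleGraph V) [DecidableRel G.Adj]

lemma meas_all (A : Set (DE G)) : MeasurableSet A :=
  A.to_countable.measurableSet

/-- a cylinder event -/
def Cyl (s : Finset ℕ) (g : ℕ → DE G) : Set (ℕ → DE G) := {θ | ∀ i ∈ s, θ i = g i}

lemma cyl_eq_biInter (s : Finset ℕ) (g : ℕ → DE G) :
    Cyl G s g = ⋂ i ∈ s, (fun θ : ℕ → DE G => θ i) ⁻¹' {g i} := by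
  ext θ
  simp [Cyl, Set.mem_iInter]

lemma cyl_measurable (s : Finset ℕ) (g : ℕ → DE G) : MeasurableSet (Cyl G s g) := by
  rw [cyl_eq_biInter]
  exact MeasurableSet.biInter s.countable_toSet
    (fun i _ => measurable_pi_apply i (measurableSet_singleton _))

variable (μω : Measure (ℕ → DE G)) [IsProbabilityMeasure μω]

section Master

variable (hindep : iIndepFun (fun k (ω : ℕ → DE G) => ω k) μω)
variable (hunif : ∀ (k : ℕ) (e : DE G), μω {ω | ω k = e} = (2 * G.edgeFinset.card : ℝ≥0∞)⁻¹)

include hindep hunif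

lemma cyl_measure (s : Finset ℕ) (g : ℕ → DE G) :
    μω (Cyl G s g) = ((2 * G.edgeFinset.card : ℝ≥0∞))⁻¹ ^ s.card := by
  have h := hindep.measure_inter_preimage_eq_mul s
    (sets := fun i => {g i}) (fun i _ => measurableSet_singleton _)
  rw [cyl_eq_biInter, h]
  have hfac : ∀ i ∈ s, μω ((fun ω : ℕ → DE G => ω i) ⁻¹' {g i})
      = ((2 * G.edgeFinset.card : ℝ≥0∞))⁻¹ := by
    intro i _
    have : ((fun ω : ℕ → DE G => ω i) ⁻¹' {g i}) = {ω : ℕ → DE G | ω i = g i} := by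
      ext θ; simp
    rw [this, hunif]
  rw [Finset.prod_congr rfl hfac, Finset.prod_const]

/-- word cylinder -/
lemma cylW_measure (m : ℕ) (w : Fin m → DE G) :
    μω {θ : ℕ → DE G | ∀ i : Fin m, θ i = w i}
      = ((2 * G.edgeFinset.card : ℝ≥0∞))⁻¹ ^ m := by
  have h := hindep.measure_inter_preimage_eq_mul (Finset.range m)
    (sets := fun i => if h : i < m then {w ⟨i, h⟩} else Set.univ)
    (fun i _ => by split <;> [exact measurableSet_singleton _; exact MeasurableSet.univ])
  have hset : (⋂ i ∈ Finset.range m, (fun ω : ℕ → DE G => ω i) ⁻¹'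
      (if h : i < m then {w ⟨i, h⟩} else Set.univ))
      = {θ : ℕ → DE G | ∀ i : Fin m, θ i = w i} := by
    ext θ
    simp only [Set.mem_iInter, Finset.mem_range, Set.mem_setOf_eq, Set.mem_preimage]
    constructor
    · intro h i
      have := h i.val i.isLt
      rwa [dif_pos i.isLt, Set.mem_singleton_iff, Fin.eta] at this
    · intro h i hi
      rw [dif_pos hi, Set.mem_singleton_iff]
      exact h ⟨i, hi⟩
  rw [hset] at h
  rw [h]
  have hfac : ∀ i ∈ Finset.range m, μω ((fun ω : ℕ → DE G => ω i) ⁻¹'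
      (if h : i < m then {w ⟨i, h⟩} else Set.univ))
      = ((2 * G.edgeFinset.card : ℝ≥0∞))⁻¹ := by
    intro i hi
    have hi' : i < m := Finset.mem_range.mp hi
    rw [dif_pos hi']
    have : ((fun ω : ℕ → DE G => ω i) ⁻¹' {w ⟨i, hi'⟩}) = {ω : ℕ → DE G | ω i = w ⟨i, hi'⟩} := by
      ext θ; simp
    rw [this, hunif]
  rw [Finset.prod_congr rfl hfac, Finset.prod_const, Finset.card_range]

lemma prefix_measure (m : ℕ) (A : Finset (Fin m → DE G)) :
    μω {θ : ℕ → DE G | (fun i : Fin m => θ i) ∈ A}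
      = A.card * ((2 * G.edgeFinset.card : ℝ≥0∞))⁻¹ ^ m := by
  have hset : {θ : ℕ → DE G | (fun i : Fin m => θ i) ∈ A}
      = ⋃ w ∈ A, {θ : ℕ → DE G | ∀ i : Fin m, θ i = w i} := by
    ext θ
    simp only [Set.mem_setOf_eq, Set.mem_iUnion]
    constructor
    · intro h
      exact ⟨_, h, fun i => rfl⟩
    · rintro ⟨w, hw, h⟩
      have : (fun i : Fin m => θ i) = w := funext h
      rwa [this]
  rw [hset, measure_biUnion_finset ?_ ?_]
  · rw [Finset.sum_congr rfl (fun w _ => cylW_measure G μω hindep hunif m w),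
      Finset.sum_const, nsmul_eq_mul]
  · intro w _ w' _ hww'
    refine Set.disjoint_left.mpr (fun θ hθ hθ' => ?_)
    exact hww' (funext (fun i => (hθ i).symm.trans (hθ' i)))
  · intro w _
    have : {θ : ℕ → DE G | ∀ i : Fin m, θ i = w i}
        = ⋂ i : Fin m, (fun θ : ℕ → DE G => θ i) ⁻¹' {w i} := by
      ext θ; simp
    rw [this]
    exact MeasurableSet.iInter (fun i => measurable_pi_apply _ (measurableSet_singleton _))

end Master

/-- the family of cylinders is a π-system generating the σ-algebra -/
def cylFam : Set (Set (ℕ → DE G)) := {t | ∃ s g, t = Cyl G s g}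

lemma isPiSystem_cylFam : IsPiSystem (cylFam G) := by
  rintro t1 ⟨s1, g1, rfl⟩ t2 ⟨s2, g2, rfl⟩ hne
  obtain ⟨θ0, hθ0⟩ := hne
  refine ⟨s1 ∪ s2, θ0, ?_⟩
  obtain ⟨h1, h2⟩ := hθ0
  ext θ
  simp only [Set.mem_inter_iff, Cyl, Set.mem_setOf_eq, Finset.mem_union]
  constructor
  · rintro ⟨ha, hb⟩ i hi
    rcases hi with hi | hi
    · rw [ha i hi, h1 i hi]
    · rw [hb i hi, h2 i hi]
  · intro h
    constructor
    · intro i hi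
      rw [h i (Or.inl hi), ← h1 i hi]
    · intro i hi
      rw [h i (Or.inr hi), ← h2 i hi]

lemma generateFrom_cylFam :
    (MeasurableSpace.pi : MeasurableSpace (ℕ → DE G)) = .generateFrom (cylFam G) := by
  refine le_antisymm ?_ ?_
  · -- pi ≤ generateFrom: each coordinate is measurable wrt generateFrom
    refine iSup_le (fun i => ?_)
    rw [MeasurableSpace.comap_le_iff_le_map]
    intro A _
    rw [MeasurableSpace.map_def]
    have : (fun θ : ℕ → DE G => θ i) ⁻¹' A
        = ⋃ e ∈ A, Cyl G {i} (fun _ => e) := by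
      ext θ
      simp [Cyl]
    rw [this]
    exact MeasurableSet.biUnion A.to_countable
      (fun e _ => MeasurableSpace.measurableSet_generateFrom ⟨{i}, fun _ => e, rfl⟩)
  · refine MeasurableSpace.generateFrom_le ?_
    rintro t ⟨s, g, rfl⟩
    exact cyl_measurable G s g

variable {G}

/-- key independence/stationarity: prefix cylinder and shifted event are independent -/
lemma key2
    (hindep : iIndepFun (fun k (ω : ℕ → DE G) => ω k) μω)
    (hunif : ∀ (k : ℕ) (e : DE G), μω {ω | ω k = e} = (2 * G.edgeFinset.card : ℝ≥0∞)⁻¹)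
    (m : ℕ) (w : Fin m → DE G) (B : Set (ℕ → DE G)) (hB : MeasurableSet B) :
    μω ({θ : ℕ → DE G | ∀ i : Fin m, θ i = w i} ∩ (fun θ (i : ℕ) => θ (m + i)) ⁻¹' B)
      = ((2 * G.edgeFinset.card : ℝ≥0∞))⁻¹ ^ m * μω B := by
  classical
  set tE : ℝ≥0∞ := ((2 * G.edgeFinset.card : ℝ≥0∞))⁻¹ with htE
  set shift : (ℕ → DE G) → (ℕ → DE G) := fun θ i => θ (m + i) with hshift
  have hshift_meas : Measurable shift :=
    measurable_pi_lambda _ (fun i => measurable_pi_apply _)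
  set W : Set (ℕ → DE G) := {θ : ℕ → DE G | ∀ i : Fin m, θ i = w i} with hW
  have hWmeas : MeasurableSet W := by
    have : W = ⋂ i : Fin m, (fun θ : ℕ → DE G => θ i) ⁻¹' {w i} := by
      ext θ; simp [hW]
    rw [this]
    exact MeasurableSet.iInter (fun i => measurable_pi_apply _ (measurableSet_singleton _))
  set μ1 : Measure (ℕ → DE G) := Measure.map shift (μω.restrict W) with hμ1
  have happly : ∀ (B' : Set (ℕ → DE G)), MeasurableSet B' →
      μ1 B' = μω (shift ⁻¹' B' ∩ W) := by
    intro B' hB'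
    rw [hμ1, Measure.map_apply hshift_meas hB', Measure.restrict_apply (hshift_meas hB')]
  have hWspec : μω W = tE ^ m := cylW_measure G μω hindep hunif m w
  haveI hfin : IsFiniteMeasure μ1 := by
    constructor
    rw [happly _ MeasurableSet.univ]
    exact lt_of_le_of_lt (measure_mono (Set.subset_univ _))
      (by rw [measure_univ]; exact ENNReal.one_lt_top)
  have hext : μ1 = tE ^ m • μω := by
    refine ext_of_generate_finite (cylFam G) (generateFrom_cylFam G) (isPiSystem_cylFam G) ?_ ?_
    · rintro t ⟨s, g, rfl⟩
      rw [happly _ (cyl_measurable G s g)]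
      have hseteq : shift ⁻¹' (Cyl G s g) ∩ W
          = Cyl G (Finset.range m ∪ s.image (fun i => m + i))
              (fun j => if hj : j < m then w ⟨j, hj⟩ else g (j - m)) := by
        ext θ
        simp only [Set.mem_inter_iff, Set.mem_preimage, Cyl, Set.mem_setOf_eq, hW,
          Finset.mem_union, Finset.mem_range, Finset.mem_image, hshift]
        constructor
        · rintro ⟨hsh, hww⟩ j hj
          rcases hj with hj | ⟨i, hi, rfl⟩
          · rw [dif_pos hj]
            exact hww ⟨j, hj⟩
          · rw [dif_neg (by omega), show m + i - m = i by omega]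
            exact hsh i hi
        · intro h
          constructor
          · intro i hi
            have := h (m + i) (Or.inr ⟨i, hi, rfl⟩)
            rwa [dif_neg (by omega), show m + i - m = i by omega] at this
          · intro i
            have := h i.val (Or.inl i.isLt)
            rwa [dif_pos i.isLt, Fin.eta] at this
      rw [hseteq, cyl_measure G μω hindep hunif]
      have hdisj : Disjoint (Finset.range m) (s.image (fun i => m + i)) := by
        refine Finset.disjoint_left.mpr ?_
        rintro j hj hj2
        rw [Finset.mem_range] at hj
        obtain ⟨i, _, rfl⟩ := Finset.mem_image.mp hj2
        omega
      have hcard : (Finset.range m ∪ s.image (fun i => m + i)).card = m + s.card := by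
        rw [Finset.card_union_of_disjoint hdisj, Finset.card_range,
          Finset.card_image_of_injective _ (add_right_injective m)]
      rw [hcard, pow_add, Measure.smul_apply, smul_eq_mul,
        cyl_measure G μω hindep hunif]
    · rw [happly _ MeasurableSet.univ, Set.preimage_univ, Set.univ_inter, hWspec,
        Measure.smul_apply, smul_eq_mul, measure_univ, mul_one]
  have hfinal := happly B hB
  rw [hext, Measure.smul_apply, smul_eq_mul] at hfinal
  rw [Set.inter_comm]
  exact hfinal.symm

/-- measurability of prefix events -/
lemma meas_prefixSet (m : ℕ) (A : Finset (Fin m → DE G)) :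
    MeasurableSet {θ : ℕ → DE G | (fun i : Fin m => θ i) ∈ A} := by
  have hset : {θ : ℕ → DE G | (fun i : Fin m => θ i) ∈ A}
      = ⋃ w ∈ A, ⋂ i : Fin m, (fun θ : ℕ → DE G => θ i) ⁻¹' {w i} := by
    ext θ
    simp only [Set.mem_setOf_eq, Set.mem_iUnion, Set.mem_iInter, Set.mem_preimage,
      Set.mem_singleton_iff]
    constructor
    · intro h
      exact ⟨_, h, fun i => rfl⟩
    · rintro ⟨w, hw, h⟩
      rwa [funext h]
  rw [hset]
  exact MeasurableSet.biUnion A.countable_toSet (fun w _ =>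
    MeasurableSet.iInter (fun i => measurable_pi_apply _ (measurableSet_singleton _)))

lemma meas_cfg (d : V → Bool) (k : ℕ) (P : (V → Bool) → Prop) [DecidablePred P] :
    MeasurableSet {θ : ℕ → DE G | P (voterProc d (fun i => (θ i).1) k)} := by
  have hset : {θ : ℕ → DE G | P (voterProc d (fun i => (θ i).1) k)}
      = {θ : ℕ → DE G | (fun i : Fin k => θ i)
          ∈ Finset.univ.filter (fun w : Fin k → DE G => P (runW d (fun i => (w i).1)))} := by
    ext θ
    simp only [Set.mem_setOf_eq, Finset.mem_filter, Finset.mem_univ, true_and]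
    have h : runW d (fun i : Fin k => (θ i).1) = voterProc d (fun i => (θ i).1) k :=
      runW_eq d (fun j => (θ j).1) k
    constructor
    · intro hx
      rwa [← h] at hx
    · intro hx
      rwa [h] at hx
  rw [hset]
  exact meas_prefixSet _ _

section Surv

variable (hconn : G.Connected) (hne : Nonempty (DE G))
variable (hindep : iIndepFun (fun k (ω : ℕ → DE G) => ω k) μω)
variable (hunif : ∀ (k : ℕ) (e : DE G), μω {ω | ω k = e} = (2 * G.edgeFinset.card : ℝ≥0∞)⁻¹)

lemma tE_eq : ((Fintype.card (DE G) : ℕ) : ℝ≥0∞) = (2 * G.edgeFinset.card : ℝ≥0∞) := by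
  rw [card_DE]
  push_cast
  ring

include hne hindep hunif in
lemma allTrue_bound (d : V → Bool) (k : ℕ) :
    μω {θ : ℕ → DE G | voterProc d (fun i => (θ i).1) k = fun _ => true}
      ≤ (cnt d : ℝ≥0∞) * ((Fintype.card V : ℝ≥0∞))⁻¹ := by
  classical
  set T : ℕ := Fintype.card (DE G) with hT
  set n : ℕ := Fintype.card V with hn
  have hnpos : 0 < n := Fintype.card_pos_iff.mpr ⟨hne.some.1.1⟩
  set Ak : Finset (Fin k → DE G) :=
    Finset.univ.filter (fun w : Fin k → DE G => runW d (fun i => (w i).1) = fun _ => true)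
    with hAk
  have hμ : μω {θ : ℕ → DE G | voterProc d (fun i => (θ i).1) k = fun _ => true}
      = Ak.card * ((2 * G.edgeFinset.card : ℝ≥0∞))⁻¹ ^ k := by
    have hset : {θ : ℕ → DE G | voterProc d (fun i => (θ i).1) k = fun _ => true}
        = {θ : ℕ → DE G | (fun i : Fin k => θ i) ∈ Ak} := by
      ext θ
      simp only [Set.mem_setOf_eq, hAk, Finset.mem_filter, Finset.mem_univ, true_and]
      have h : runW d (fun i : Fin k => (θ i).1) = voterProc d (fun i => (θ i).1) k :=
        runW_eq d (fun j => (θ j).1) k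
      constructor
      · intro hx
        rwa [h]
      · intro hx
        rwa [h] at hx
    rw [hset]
    exact prefix_measure G μω hindep hunif k _
  rw [hμ]
  have hcntTrue : cnt (fun _ : V => true) = n := by
    rw [hn, cnt, ← Finset.card_univ]
    congr 1
    exact Finset.filter_true_of_mem (fun _ _ => rfl)
  have hnat : n * Ak.card ≤ T ^ k * cnt d := by
    have h1 : ∀ w ∈ Ak, cnt (runW d (fun i => (w i).1)) = n := by
      intro w hw
      rw [hAk, Finset.mem_filter] at hw
      rw [hw.2, hcntTrue]
    calc n * Ak.card = ∑ w ∈ Ak, n := by rw [Finset.sum_const, smul_eq_mul]; ring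
      _ = ∑ w ∈ Ak, cnt (runW d (fun i => (w i).1)) :=
          (Finset.sum_congr rfl (fun w hw => (h1 w hw).symm))
      _ ≤ ∑ w : Fin k → DE G, cnt (runW d (fun i => (w i).1)) :=
          Finset.sum_le_sum_of_subset (Finset.subset_univ _)
      _ = sumM G d k := rfl
      _ = T ^ k * cnt d := sumM_eq G d k
  -- cast to ℝ≥0∞
  have hTpos : 0 < T := Fintype.card_pos_iff.mpr hne
  have hcast : (Ak.card : ℝ≥0∞) * n ≤ (T : ℝ≥0∞) ^ k * cnt d := by
    have := (Nat.cast_le (α := ℝ≥0∞)).mpr hnat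
    push_cast at this
    calc (Ak.card : ℝ≥0∞) * n = (n : ℝ≥0∞) * Ak.card := by ring
      _ ≤ _ := this
  have hTinv : ((2 * G.edgeFinset.card : ℝ≥0∞))⁻¹ = ((T : ℕ) : ℝ≥0∞)⁻¹ := by
    rw [tE_eq]
  rw [hTinv]
  have hTne : ((T : ℕ) : ℝ≥0∞) ≠ 0 := by
    simp [hTpos.ne']
  have hTnetop : ((T : ℕ) : ℝ≥0∞) ≠ ⊤ := ENNReal.natCast_ne_top T
  have hnne : ((n : ℕ) : ℝ≥0∞) ≠ 0 := by simp [hnpos.ne']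
  have hnnetop : ((n : ℕ) : ℝ≥0∞) ≠ ⊤ := ENNReal.natCast_ne_top n
  calc (Ak.card : ℝ≥0∞) * ((T : ℕ) : ℝ≥0∞)⁻¹ ^ k
      = (Ak.card : ℝ≥0∞) * (n : ℝ≥0∞) * ((T : ℕ) : ℝ≥0∞)⁻¹ ^ k * ((n : ℝ≥0∞))⁻¹ := by
        rw [show (Ak.card : ℝ≥0∞) * (n : ℝ≥0∞) * ((T : ℕ) : ℝ≥0∞)⁻¹ ^ k * ((n : ℝ≥0∞))⁻¹
          = (Ak.card : ℝ≥0∞) * ((T : ℕ) : ℝ≥0∞)⁻¹ ^ k * ((n : ℝ≥0∞) * ((n : ℝ≥0∞))⁻¹)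
          from by ring, ENNReal.mul_inv_cancel hnne hnnetop, mul_one]
    _ ≤ (T : ℝ≥0∞) ^ k * (cnt d : ℝ≥0∞) * ((T : ℕ) : ℝ≥0∞)⁻¹ ^ k * ((n : ℝ≥0∞))⁻¹ :=
        mul_le_mul_left (mul_le_mul_left hcast _) _
    _ = (cnt d : ℝ≥0∞) * ((n : ℝ≥0∞))⁻¹ * ((T : ℝ≥0∞) ^ k * ((T : ℕ) : ℝ≥0∞)⁻¹ ^ k) := by
        ring
    _ = (cnt d : ℝ≥0∞) * ((n : ℝ≥0∞))⁻¹ := by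
        rw [← mul_pow, ENNReal.mul_inv_cancel hTne hTnetop, one_pow, mul_one]

include hconn hne hindep hunif in
lemma neverConst_null (d : V → Bool) :
    μω {θ : ℕ → DE G | ∀ k, ¬ ∃ b, voterProc d (fun i => (θ i).1) k = fun _ => b} = 0 := by
  classical
  obtain ⟨L, u, hL, hu⟩ := exists_word G hconn hne
  set T : ℕ := Fintype.card (DE G) with hT
  have hTpos : 0 < T := Fintype.card_pos_iff.mpr hne
  have hTLpos : 0 < T ^ L := pow_pos hTpos L
  have hblk : ∀ (m : ℕ) (j : Fin m) (i : Fin L), j.val * L + i.val < m * L := by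
    intro m j i
    calc j.val * L + i.val < j.val * L + L := Nat.add_lt_add_left i.isLt _
      _ = (j.val + 1) * L := by ring
      _ ≤ m * L := Nat.mul_le_mul_right L j.isLt
  set NC : Set (ℕ → DE G) :=
    {θ : ℕ → DE G | ∀ k, ¬ ∃ b, voterProc d (fun i => (θ i).1) k = fun _ => b} with hNC
  set Bad : ∀ m : ℕ, Finset (Fin (m * L) → DE G) := fun m =>
    Finset.univ.filter (fun W => ∀ j : Fin m,
      (fun i : Fin L => W ⟨j.val * L + i.val, hblk m j i⟩) ≠ u) with hBad
  have hincl : ∀ m, NC ⊆ {θ : ℕ → DE G | (fun t : Fin (m * L) => θ t) ∈ Bad m} := by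
    intro m θ hθ
    simp only [Set.mem_setOf_eq, hBad, Finset.mem_filter, Finset.mem_univ, true_and]
    intro j hj
    have hblkeq : (fun i : Fin L => (θ (j.val * L + i.val)).1) = fun i => (u i).1 := by
      funext i
      have := congrFun hj i
      rw [this]
    have hstep : voterProc d (fun i => (θ i).1) (j.val * L + L)
        = runW (voterProc d (fun i => (θ i).1) (j.val * L))
            (fun i : Fin L => (θ (j.val * L + i.val)).1) := by
      rw [voterProc_add]
      exact (runW_eq (voterProc d (fun i => (θ i).1) (j.val * L))
        (fun t => (θ (j.val * L + t)).1) L).symm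
    obtain ⟨b, hb⟩ := hu (voterProc d (fun i => (θ i).1) (j.val * L))
    refine hθ (j.val * L + L) ⟨b, ?_⟩
    rw [hstep, hblkeq, hb]
  have hcard : ∀ m, (Bad m).card ≤ (T ^ L - 1) ^ m := by
    intro m
    have hmap : ∀ W ∈ Bad m, (fun (j : Fin m) (i : Fin L) => W ⟨j.val * L + i.val, hblk m j i⟩)
        ∈ Finset.univ.filter (fun B : Fin m → Fin L → DE G => ∀ j, B j ≠ u) := by
      intro W hW
      rw [hBad, Finset.mem_filter] at hW
      rw [Finset.mem_filter]
      exact ⟨Finset.mem_univ _, hW.2⟩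
    have hinj : Set.InjOn (fun (W : Fin (m * L) → DE G) (j : Fin m) (i : Fin L) =>
        W ⟨j.val * L + i.val, hblk m j i⟩) (↑(Bad m) : Set (Fin (m * L) → DE G)) := by
      intro W _ W' _ heq
      funext t
      have hdm : t.val / L < m := (Nat.div_lt_iff_lt_mul hL).mpr t.isLt
      have hml : t.val % L < L := Nat.mod_lt _ hL
      have h2 := congrFun (congrFun heq ⟨t.val / L, hdm⟩) ⟨t.val % L, hml⟩
      simp only at h2
      have hidx : t.val / L * L + t.val % L = t.val := by
        rw [Nat.mul_comm]
        exact Nat.div_add_mod t.val L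
      have heqfin : (⟨t.val / L * L + t.val % L,
          hblk m ⟨t.val / L, hdm⟩ ⟨t.val % L, hml⟩⟩ : Fin (m * L)) = t := Fin.ext hidx
      rwa [heqfin] at h2
    refine (Finset.card_le_card_of_injOn _ hmap hinj).trans ?_
    have hfe : Finset.univ.filter (fun B : Fin m → Fin L → DE G => ∀ j, B j ≠ u)
        = Fintype.piFinset (fun _ : Fin m => Finset.univ.erase u) := by
      ext B
      simp [Fintype.mem_piFinset]
    rw [hfe, Fintype.card_piFinset]
    have herase : (Finset.univ.erase u).card = T ^ L - 1 := by
      rw [Finset.card_erase_of_mem (Finset.mem_univ u), Finset.card_univ]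
      congr 1
      rw [Fintype.card_fun, Fintype.card_fin]
    rw [Finset.prod_congr rfl (fun _ _ => herase), Finset.prod_const, Finset.card_univ,
      Fintype.card_fin]
  set r : ℝ≥0∞ := ((T ^ L - 1 : ℕ) : ℝ≥0∞) * (((T : ℕ) : ℝ≥0∞))⁻¹ ^ L with hr
  have hbound : ∀ m, μω NC ≤ r ^ m := by
    intro m
    have h1 : μω NC ≤ μω {θ : ℕ → DE G | (fun t : Fin (m * L) => θ t) ∈ Bad m} :=
      measure_mono (hincl m)
    have h2 : μω {θ : ℕ → DE G | (fun t : Fin (m * L) => θ t) ∈ Bad m}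
        = (Bad m).card * (((T : ℕ) : ℝ≥0∞))⁻¹ ^ (m * L) := by
      rw [prefix_measure G μω hindep hunif (m * L) (Bad m), tE_eq]
    have h3 : ((Bad m).card : ℝ≥0∞) ≤ ((T ^ L - 1 : ℕ) : ℝ≥0∞) ^ m := by
      have := (Nat.cast_le (α := ℝ≥0∞)).mpr (hcard m)
      push_cast at this ⊢
      exact this
    calc μω NC ≤ (Bad m).card * (((T : ℕ) : ℝ≥0∞))⁻¹ ^ (m * L) := h1.trans (le_of_eq h2)
      _ ≤ ((T ^ L - 1 : ℕ) : ℝ≥0∞) ^ m * (((T : ℕ) : ℝ≥0∞))⁻¹ ^ (m * L) :=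
          mul_le_mul_left h3 _
      _ = r ^ m := by
          rw [hr, mul_pow, ← pow_mul, Nat.mul_comm L m]
  have hrlt : r < 1 := by
    have hTL0 : (((T : ℕ) : ℝ≥0∞)) ^ L ≠ 0 := by
      apply pow_ne_zero
      simp [hTpos.ne']
    have hTLtop : (((T : ℕ) : ℝ≥0∞)) ^ L ≠ ⊤ := by
      apply ENNReal.pow_ne_top
      exact ENNReal.natCast_ne_top T
    have hlt : ((T ^ L - 1 : ℕ) : ℝ≥0∞) < (((T : ℕ) : ℝ≥0∞)) ^ L := by
      have : ((T ^ L - 1 : ℕ) : ℝ≥0∞) < ((T ^ L : ℕ) : ℝ≥0∞) :=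
        Nat.cast_lt.mpr (Nat.sub_lt hTLpos one_pos)
      rwa [Nat.cast_pow] at this
    have hc0 : ((((T : ℕ) : ℝ≥0∞)) ^ L)⁻¹ ≠ 0 := ENNReal.inv_ne_zero.mpr hTLtop
    have hctop : ((((T : ℕ) : ℝ≥0∞)) ^ L)⁻¹ ≠ ⊤ := ENNReal.inv_ne_top.mpr hTL0
    have := ENNReal.mul_lt_mul_left hc0 hctop hlt
    rw [ENNReal.mul_inv_cancel hTL0 hTLtop, ENNReal.inv_pow] at this
    rwa [hr]
  have htend := ENNReal.tendsto_pow_atTop_nhds_zero_of_lt_one hrlt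
  have hle0 : μω NC ≤ 0 := ge_of_tendsto htend (Filter.Eventually.of_forall hbound)
  exact le_antisymm hle0 (by positivity)

include hconn hne hindep hunif in
lemma survival_bound (d : V → Bool) :
    μω {θ : ℕ → DE G | ∀ k, voterProc d (fun i => (θ i).1) k ≠ fun _ => false}
      ≤ (cnt d : ℝ≥0∞) * ((Fintype.card V : ℝ≥0∞))⁻¹ := by
  classical
  have hsub : {θ : ℕ → DE G | ∀ k, voterProc d (fun i => (θ i).1) k ≠ fun _ => false}
      ⊆ (⋃ k, {θ : ℕ → DE G | voterProc d (fun i => (θ i).1) k = fun _ => true})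
        ∪ {θ : ℕ → DE G | ∀ k, ¬ ∃ b, voterProc d (fun i => (θ i).1) k = fun _ => b} := by
    intro θ hθ
    by_cases hc : ∃ k b, voterProc d (fun i => (θ i).1) k = fun _ => b
    · obtain ⟨k, b, hb⟩ := hc
      cases b with
      | false => exact absurd hb (hθ k)
      | true => exact Or.inl (Set.mem_iUnion.mpr ⟨k, hb⟩)
    · push_neg at hc
      exact Or.inr (fun k hk => by
        obtain ⟨b, hb⟩ := hk
        exact hc k b hb)
  refine (measure_mono hsub).trans ?_
  refine (measure_union_le _ _).trans ?_
  rw [neverConst_null μω hconn hne hindep hunif d, add_zero]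
  have hmono : Monotone (fun k => {θ : ℕ → DE G | voterProc d (fun i => (θ i).1) k
      = fun _ => true}) := by
    intro k k' hk θ hθ
    simp only [Set.mem_setOf_eq] at hθ ⊢
    funext v
    exact voterProc_allTrue d _ hk (fun v' => congrFun hθ v') v
  rw [hmono.measure_iUnion]
  exact iSup_le (fun k => allTrue_bound μω hne hindep hunif d k)

end Surv

end Measure

section MainHelpers

variable [Fintype V] (G : SimpleGraph V) [DecidableRel G.Adj]

lemma xor_false_eq {a b : Bool} (h : xor a b = false) : a = b := by
  cases a <;> cases b <;> simp_all

lemma upd_comm_off (ξ : V → Bool) (e f : V × V) (z : V) (hz1 : z ≠ e.2) (hz2 : z ≠ f.2) :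
    voterUpd f (voterUpd e ξ) z = voterUpd e (voterUpd f ξ) z := by
  simp [voterUpd_apply, hz1, hz2]

/-- prefix, the two swapped edges, configuration and difference configuration -/
def preW (ℓ : ℕ) (w : Fin (ℓ+2) → DE G) : Fin ℓ → DE G := fun i => w ⟨i.val, by omega⟩

def eW (ℓ : ℕ) (w : Fin (ℓ+2) → DE G) : DE G := w ⟨ℓ, by omega⟩

def fW (ℓ : ℕ) (w : Fin (ℓ+2) → DE G) : DE G := w ⟨ℓ+1, by omega⟩

def xiW (c : V → Bool) (ℓ : ℕ) (w : Fin (ℓ+2) → DE G) : V → Bool :=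
  runW c (fun i => ((preW G ℓ w i)).1)

def dW (c : V → Bool) (ℓ : ℕ) (w : Fin (ℓ+2) → DE G) : V → Bool := fun v =>
  xor (voterUpd (fW G ℓ w).1 (voterUpd (eW G ℓ w).1 (xiW G c ℓ w)) v)
      (voterUpd (eW G ℓ w).1 (voterUpd (fW G ℓ w).1 (xiW G c ℓ w)) v)

noncomputable def GoodW (c : V → Bool) (ℓ : ℕ) : Finset (Fin (ℓ+2) → DE G) :=
  Finset.univ.filter (fun w =>
    Interact G (eW G ℓ w) (fW G ℓ w) ∧
    (xiW G c ℓ w (eW G ℓ w).1.1 ≠ xiW G c ℓ w (eW G ℓ w).1.2 ∨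
     xiW G c ℓ w (fW G ℓ w).1.1 ≠ xiW G c ℓ w (fW G ℓ w).1.2))

lemma dW_cnt_le (c : V → Bool) (ℓ : ℕ) (w : Fin (ℓ+2) → DE G) :
    cnt (dW G c ℓ w) ≤ 2 := by
  classical
  have hsub : Finset.univ.filter (fun v => dW G c ℓ w v = true)
      ⊆ {(eW G ℓ w).1.2, (fW G ℓ w).1.2} := by
    intro v hv
    rw [Finset.mem_filter] at hv
    by_contra hmem
    simp only [Finset.mem_insert, Finset.mem_singleton] at hmem
    push_neg at hmem
    have := upd_comm_off (xiW G c ℓ w) (eW G ℓ w).1 (fW G ℓ w).1 v hmem.1 hmem.2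
    rw [dW, this] at hv
    simp at hv
  calc cnt (dW G c ℓ w) ≤ ({(eW G ℓ w).1.2, (fW G ℓ w).1.2} : Finset V).card :=
      Finset.card_le_card hsub
    _ ≤ 2 := by
      refine (Finset.card_insert_le _ _).trans ?_
      simp

lemma goodW_card (c : V → Bool) (ℓ : ℕ) :
    (GoodW G c ℓ).card ≤ 6 * G.maxDegree * sumD G c ℓ := by
  classical
  have hfib := Finset.card_eq_sum_card_fiberwise (f := fun w => preW G ℓ w)
    (s := GoodW G c ℓ) (t := (Finset.univ : Finset (Fin ℓ → DE G)))
    (fun w _ => Finset.mem_univ _)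
  rw [hfib]
  have hfiber : ∀ p : Fin ℓ → DE G,
      ((GoodW G c ℓ).filter (fun w => preW G ℓ w = p)).card
        ≤ 6 * G.maxDegree * dcnt (G := G) (runW c (fun i => ((p i)).1)) := by
    intro p
    set ξ := runW c (fun i => ((p i)).1) with hξ
    refine le_trans ?_ (card_pairs_le (G := G) ξ)
    refine Finset.card_le_card_of_injOn (fun w => (eW G ℓ w, fW G ℓ w)) ?_ ?_
    · intro w hw
      rw [Finset.mem_coe, Finset.mem_filter] at hw
      obtain ⟨hwG, hwp⟩ := hw
      rw [GoodW, Finset.mem_filter] at hwG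
      have hxiw : xiW G c ℓ w = ξ := by
        rw [xiW, hwp, hξ]
      rw [Finset.mem_coe, Finset.mem_filter]
      refine ⟨Finset.mem_univ _, ?_, ?_⟩
      · exact hwG.2.1
      · rw [← hxiw]
        exact hwG.2.2
    · intro w hw w' hw' heq
      rw [Finset.coe_filter, Set.mem_setOf_eq] at hw hw'
      have hpre : preW G ℓ w = preW G ℓ w' := hw.2.trans hw'.2.symm
      have he : eW G ℓ w = eW G ℓ w' := congrArg Prod.fst heq
      have hf : fW G ℓ w = fW G ℓ w' := congrArg Prod.snd heq
      funext j
      by_cases hj1 : j.val < ℓ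
      · have := congrFun hpre ⟨j.val, hj1⟩
        rw [preW] at this
        simp only at this
        have hidx : (⟨j.val, by omega⟩ : Fin (ℓ+2)) = j := Fin.ext rfl
        rwa [hidx] at this
      · by_cases hj2 : j.val = ℓ
        · have hidx : (⟨ℓ, by omega⟩ : Fin (ℓ+2)) = j := Fin.ext hj2.symm
          rw [eW, eW, hidx] at he
          exact he
        · have hj3 : j.val = ℓ + 1 := by omega
          have hidx : (⟨ℓ+1, by omega⟩ : Fin (ℓ+2)) = j := Fin.ext hj3.symm
          rw [fW, fW, hidx] at hf
          exact hf
  calc ∑ p : Fin ℓ → DE G, ((GoodW G c ℓ).filter (fun w => preW G ℓ w = p)).card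
      ≤ ∑ p : Fin ℓ → DE G, 6 * G.maxDegree * dcnt (G := G) (runW c (fun i => ((p i)).1)) :=
        Finset.sum_le_sum (fun p _ => hfiber p)
    _ = 6 * G.maxDegree * sumD G c ℓ := by
        rw [sumD, Finset.mul_sum]

/-- the key deterministic decomposition -/
lemma main_incl (ℓ : ℕ) (c : V → Bool) (θ : ℕ → DE G)
    (hcons : consensus c (fun i => ((θ i : V × V))) ≠
      consensus c (fun i => ((swapSeq ℓ θ i).1))) :
    (fun i : Fin (ℓ+2) => θ i) ∈ GoodW G c ℓ ∧
    ∀ k, voterProc (dW G c ℓ (fun i : Fin (ℓ+2) => θ i)) (fun i => (θ (ℓ+2+i)).1) k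
      ≠ (fun _ => false) := by
  classical
  set ω₁ : ℕ → V × V := fun i => (θ i).1 with hω₁
  set ω₂ : ℕ → V × V := fun i => ((swapSeq ℓ θ i)).1 with hω₂
  set w : Fin (ℓ+2) → DE G := fun i => θ i with hw
  have hξ : xiW G c ℓ w = voterProc c ω₁ ℓ := runW_eq c ω₁ ℓ
  have hω12 : ∀ i, i ≠ ℓ → i ≠ ℓ+1 → ω₂ i = ω₁ i := by
    intro i h1 h2
    show ((θ (Equiv.swap ℓ (ℓ+1) i)).1) = (θ i).1
    rw [Equiv.swap_apply_of_ne_of_ne h1 h2]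
  have hω2ℓ : ω₂ ℓ = ω₁ (ℓ+1) := by
    show ((θ (Equiv.swap ℓ (ℓ+1) ℓ)).1) = (θ (ℓ+1)).1
    rw [Equiv.swap_apply_left]
  have hω2ℓ1 : ω₂ (ℓ+1) = ω₁ ℓ := by
    show ((θ (Equiv.swap ℓ (ℓ+1) (ℓ+1))).1) = (θ ℓ).1
    rw [Equiv.swap_apply_right]
  have hcfg2 : voterProc c ω₂ ℓ = voterProc c ω₁ ℓ :=
    voterProc_congr c ω₂ ω₁ ℓ (fun i hi => hω12 i (by omega) (by omega))
  set e : DE G := eW G ℓ w with he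
  set f : DE G := fW G ℓ w with hf
  have he1 : ω₁ ℓ = e.1 := rfl
  have hf1 : ω₁ (ℓ+1) = f.1 := rfl
  have hA : voterProc c ω₁ (ℓ+2) = voterUpd f.1 (voterUpd e.1 (xiW G c ℓ w)) := by
    show voterUpd (ω₁ (ℓ+1)) (voterUpd (ω₁ ℓ) (voterProc c ω₁ ℓ)) = _
    rw [hξ, he1, hf1]
  have hB : voterProc c ω₂ (ℓ+2) = voterUpd e.1 (voterUpd f.1 (xiW G c ℓ w)) := by
    show voterUpd (ω₂ (ℓ+1)) (voterUpd (ω₂ ℓ) (voterProc c ω₂ ℓ)) = _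
    rw [hξ, hcfg2, hω2ℓ, hω2ℓ1, he1, hf1]
  have hωtail : ∀ i, ℓ+2 ≤ i → ω₁ i = ω₂ i :=
    fun i hi => (hω12 i (by omega) (by omega)).symm
  have hAB : voterUpd f.1 (voterUpd e.1 (xiW G c ℓ w))
      ≠ voterUpd e.1 (voterUpd f.1 (xiW G c ℓ w)) := by
    intro heq
    exact hcons (consensus_congr_tail c c ω₁ ω₂ (ℓ+2) (by rw [hA, hB, heq]) hωtail)
  obtain ⟨hint, hdisc, _⟩ := double_upd (xiW G c ℓ w) e.1 f.1
    (G.ne_of_adj e.2) (G.ne_of_adj f.2) hAB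
  constructor
  · rw [GoodW, Finset.mem_filter]
    exact ⟨Finset.mem_univ _, hint, hdisc⟩
  · intro k hk
    have hxor : (fun v => xor (voterProc c ω₁ (ℓ+2+k) v) (voterProc c ω₂ (ℓ+2+k) v))
        = voterProc (dW G c ℓ w) (fun i => ω₁ (ℓ+2+i)) k := by
      rw [voterProc_add c ω₁ (ℓ+2) k, voterProc_add c ω₂ (ℓ+2) k, hA, hB]
      have htl : (fun i => ω₂ (ℓ+2+i)) = (fun i => ω₁ (ℓ+2+i)) :=
        funext (fun i => (hωtail (ℓ+2+i) (by omega)).symm)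
      rw [htl, voterProc_xor]
      rfl
    have hEq : voterProc c ω₁ (ℓ+2+k) = voterProc c ω₂ (ℓ+2+k) := by
      funext v
      have h1 := congrFun hxor v
      rw [show voterProc (dW G c ℓ w) (fun i => ω₁ (ℓ+2+i)) k
        = voterProc (dW G c ℓ w) (fun i => (θ (ℓ+2+i)).1) k from rfl, hk] at h1
      exact xor_false_eq h1
    exact hcons (consensus_congr_tail c c ω₁ ω₂ (ℓ+2+k) hEq
      (fun i hi => hωtail i (by omega)))

end MainHelpers

end Stmt9

/-- For the voter model on a finite connected graph with `n` vertices and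
maximum degree `Δ`, with i.i.d. Bernoulli(p) initial opinions independent of the i.i.d.
uniform edge selections, the sum over `ℓ` of the probabilities that swapping the `ℓ`-th and
`(ℓ+1)`-th edge selections changes the consensus opinion is at most `3nΔ/|E|`. -/
theorem stmt9 {V : Type*} [Fintype V] [DecidableEq V]
    [MeasurableSpace V] [MeasurableSingletonClass V]
    (G : SimpleGraph V) [DecidableRel G.Adj] (hconn : G.Connected)
    (p : ℝ) (hp0 : 0 < p) (hp1 : p < 1)
    (ν : Measure Bool) [IsProbabilityMeasure ν] (hν : ν {true} = ENNReal.ofReal p)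
    (μω : Measure (ℕ → {e : V × V // G.Adj e.1 e.2})) [IsProbabilityMeasure μω]
    (hindep : iIndepFun (fun k ω => ω k) μω)
    (hunif : ∀ (k : ℕ) (e : {e : V × V // G.Adj e.1 e.2}),
      μω {ω | ω k = e} = (2 * G.edgeFinset.card : ℝ≥0∞)⁻¹) :
    ∑' ℓ : ℕ,
      (Measure.prod (Measure.pi fun _ : V => ν) μω)
        {x | consensus x.1 (fun i => ((x.2 i : V × V))) ≠
             consensus x.1 (fun i => ((swapSeq ℓ x.2 i).1))}
      ≤ ENNReal.ofReal
          (3 * (Fintype.card V : ℝ) * (G.maxDegree : ℝ) / (G.edgeFinset.card : ℝ)) := by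
  classical
  rcases isEmpty_or_nonempty {e : V × V // G.Adj e.1 e.2} with hemp | hne
  · haveI : IsEmpty (ℕ → {e : V × V // G.Adj e.1 e.2}) := ⟨fun f => hemp.false (f 0)⟩
    have h1 : μω Set.univ = 1 := measure_univ
    rw [Set.univ_eq_empty_iff.mpr inferInstance, measure_empty] at h1
    exact absurd h1 zero_ne_one
  set μpi : Measure (V → Bool) := Measure.pi fun _ : V => ν with hμpi
  set n : ℕ := Fintype.card V with hn
  have hV : Nonempty V := ⟨hne.some.1.1⟩
  have hnpos : 0 < n := Fintype.card_pos_iff.mpr hV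
  set T : ℕ := Fintype.card (Stmt9.DE G) with hT
  have hTpos : 0 < T := Fintype.card_pos_iff.mpr hne
  have hTE : T = 2 * G.edgeFinset.card := Stmt9.card_DE G
  have hEpos : 0 < G.edgeFinset.card := by omega
  set t : ℝ≥0∞ := ((2 * G.edgeFinset.card : ℝ≥0∞))⁻¹ with ht
  have htT : t = (((T : ℕ)) : ℝ≥0∞)⁻¹ := by
    rw [ht, ← Stmt9.tE_eq (G := G)]
  have hTne : (((T : ℕ)) : ℝ≥0∞) ≠ 0 := by simp [hTpos.ne']
  have hTnetop : (((T : ℕ)) : ℝ≥0∞) ≠ ⊤ := ENNReal.natCast_ne_top T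
  have hnne : (((n : ℕ)) : ℝ≥0∞) ≠ 0 := by simp [hnpos.ne']
  have hnnetop : (((n : ℕ)) : ℝ≥0∞) ≠ ⊤ := ENNReal.natCast_ne_top n
  have htcancel : (((T : ℕ)) : ℝ≥0∞) * t = 1 := by
    rw [htT]; exact ENNReal.mul_inv_cancel hTne hTnetop
  set Δ : ℕ := G.maxDegree with hΔ
  set Surv : (V → Bool) → Set (ℕ → Stmt9.DE G) := fun d =>
    {θ | ∀ k, voterProc d (fun i => (θ i).1) k ≠ fun _ => false} with hSurv
  have hSurvMeas : ∀ d, MeasurableSet (Surv d) := by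
    intro d
    have heq : Surv d = ⋂ k, {θ : ℕ → Stmt9.DE G |
        (fun cfg => cfg ≠ fun _ : V => false) (voterProc d (fun i => (θ i).1) k)} := by
      ext θ; simp [hSurv]
    rw [heq]
    exact MeasurableSet.iInter (fun k =>
      Stmt9.meas_cfg d k (fun cfg => cfg ≠ fun _ : V => false))
  have hSurvBound : ∀ (c : V → Bool) (ℓ : ℕ) (w : Fin (ℓ+2) → Stmt9.DE G),
      μω (Surv (Stmt9.dW G c ℓ w)) ≤ 2 * (((n : ℕ)) : ℝ≥0∞)⁻¹ := by
    intro c ℓ w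
    refine (Stmt9.survival_bound μω hconn hne hindep hunif _).trans ?_
    refine mul_le_mul_left ?_ _
    exact_mod_cast Nat.cast_le.mpr (Stmt9.dW_cnt_le G c ℓ w)
  -- per-ℓ bound
  have hper : ∀ ℓ : ℕ, (Measure.prod μpi μω)
      {x : (V → Bool) × (ℕ → Stmt9.DE G) |
        consensus x.1 (fun i => ((x.2 i : V × V))) ≠
        consensus x.1 (fun i => ((swapSeq ℓ x.2 i).1))}
      ≤ ∑ c : V → Bool, μpi {c} *
          (((6 * Δ * Stmt9.sumD G c ℓ : ℕ) : ℝ≥0∞) * (t ^ (ℓ+2) * (2 * (((n : ℕ)) : ℝ≥0∞)⁻¹))) := by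
    intro ℓ
    have hsub : {x : (V → Bool) × (ℕ → Stmt9.DE G) |
        consensus x.1 (fun i => ((x.2 i : V × V))) ≠
        consensus x.1 (fun i => ((swapSeq ℓ x.2 i).1))}
        ⊆ ⋃ c : V → Bool, ⋃ w ∈ Stmt9.GoodW G c ℓ,
            ({c} ×ˢ ({θ : ℕ → Stmt9.DE G | ∀ i : Fin (ℓ+2), θ i = w i}
              ∩ (fun θ (i : ℕ) => θ ((ℓ+2) + i)) ⁻¹' Surv (Stmt9.dW G c ℓ w))) := by
      rintro ⟨c, θ⟩ hx
      obtain ⟨hgood, hsurv⟩ := Stmt9.main_incl G ℓ c θ hx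
      refine Set.mem_iUnion.mpr ⟨c, Set.mem_iUnion₂.mpr
        ⟨(fun i : Fin (ℓ+2) => θ i), hgood, ?_⟩⟩
      exact ⟨rfl, ⟨fun i => rfl, hsurv⟩⟩
    refine (measure_mono hsub).trans ?_
    refine (measure_iUnion_le _).trans ?_
    rw [tsum_fintype]
    refine Finset.sum_le_sum (fun c _ => ?_)
    refine (measure_biUnion_finset_le _ _).trans ?_
    calc ∑ w ∈ Stmt9.GoodW G c ℓ, (Measure.prod μpi μω)
          ({c} ×ˢ ({θ : ℕ → Stmt9.DE G | ∀ i : Fin (ℓ+2), θ i = w i}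
            ∩ (fun θ (i : ℕ) => θ ((ℓ+2) + i)) ⁻¹' Surv (Stmt9.dW G c ℓ w)))
        ≤ ∑ _w ∈ Stmt9.GoodW G c ℓ, μpi {c} * (t ^ (ℓ+2) * (2 * (((n : ℕ)) : ℝ≥0∞)⁻¹)) := by
          refine Finset.sum_le_sum (fun w hw => ?_)
          rw [Measure.prod_prod,
            Stmt9.key2 μω hindep hunif (ℓ+2) w _ (hSurvMeas (Stmt9.dW G c ℓ w)), ← ht]
          exact mul_le_mul_right (mul_le_mul_right (hSurvBound c ℓ w) _) _
      _ = (Stmt9.GoodW G c ℓ).card • (μpi {c} * (t ^ (ℓ+2) * (2 * (((n : ℕ)) : ℝ≥0∞)⁻¹))) :=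
          Finset.sum_const _
      _ ≤ (((6 * Δ * Stmt9.sumD G c ℓ : ℕ)) : ℝ≥0∞)
            * (μpi {c} * (t ^ (ℓ+2) * (2 * (((n : ℕ)) : ℝ≥0∞)⁻¹))) := by
          rw [nsmul_eq_mul]
          exact mul_le_mul_left (Nat.cast_le.mpr (Stmt9.goodW_card G c ℓ)) _
      _ = μpi {c} * (((6 * Δ * Stmt9.sumD G c ℓ : ℕ) : ℝ≥0∞)
            * (t ^ (ℓ+2) * (2 * (((n : ℕ)) : ℝ≥0∞)⁻¹))) := by ring
  -- the discordance sum bound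
  have hDsum : ∀ (c : V → Bool) (K : ℕ),
      (∑ ℓ ∈ Finset.range K, ((Stmt9.sumD G c ℓ : ℕ) : ℝ≥0∞) * t ^ ℓ)
        ≤ (((n : ℕ)) : ℝ≥0∞) ^ 2 * (((T : ℕ)) : ℝ≥0∞) / 4 := by
    intro c K
    rcases Nat.eq_zero_or_pos K with rfl | hK
    · simp
    · have hkey := Stmt9.key_nat G c K
      have hcast : (4 : ℝ≥0∞) * ∑ ℓ ∈ Finset.range K,
          (((T : ℕ)) : ℝ≥0∞) ^ (K-1-ℓ) * ((Stmt9.sumD G c ℓ : ℕ) : ℝ≥0∞)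
          ≤ (((T : ℕ)) : ℝ≥0∞) ^ K * (((n : ℕ)) : ℝ≥0∞) ^ 2 := by
        exact_mod_cast hkey
      have hterm : ∀ ℓ ∈ Finset.range K, ((Stmt9.sumD G c ℓ : ℕ) : ℝ≥0∞) * t ^ ℓ
          = ((((T : ℕ)) : ℝ≥0∞) ^ (K-1-ℓ) * ((Stmt9.sumD G c ℓ : ℕ) : ℝ≥0∞)) * t ^ (K-1) := by
        intro ℓ hℓ
        have hℓK : ℓ ≤ K - 1 := by
          have := Finset.mem_range.mp hℓ; omega
        have hsplit : t ^ (K-1) = t ^ (K-1-ℓ) * t ^ ℓ := by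
          rw [← pow_add]
          congr 1
          omega
        rw [hsplit, show ((((T : ℕ)) : ℝ≥0∞) ^ (K-1-ℓ) * ((Stmt9.sumD G c ℓ : ℕ) : ℝ≥0∞))
            * (t ^ (K-1-ℓ) * t ^ ℓ)
          = ((((T : ℕ)) : ℝ≥0∞) * t) ^ (K-1-ℓ)
            * (((Stmt9.sumD G c ℓ : ℕ) : ℝ≥0∞) * t ^ ℓ) from by rw [mul_pow]; ring,
          htcancel, one_pow, one_mul]
      rw [Finset.sum_congr rfl hterm, ← Finset.sum_mul]
      rw [ENNReal.le_div_iff_mul_le (Or.inl (by norm_num)) (Or.inl (by norm_num))]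
      calc (∑ ℓ ∈ Finset.range K, (((T : ℕ)) : ℝ≥0∞) ^ (K-1-ℓ)
              * ((Stmt9.sumD G c ℓ : ℕ) : ℝ≥0∞)) * t ^ (K-1) * 4
          = (4 * ∑ ℓ ∈ Finset.range K, (((T : ℕ)) : ℝ≥0∞) ^ (K-1-ℓ)
              * ((Stmt9.sumD G c ℓ : ℕ) : ℝ≥0∞)) * t ^ (K-1) := by ring
        _ ≤ ((((T : ℕ)) : ℝ≥0∞) ^ K * (((n : ℕ)) : ℝ≥0∞) ^ 2) * t ^ (K-1) :=
            mul_le_mul_left hcast _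
        _ = (((n : ℕ)) : ℝ≥0∞) ^ 2 * (((T : ℕ)) : ℝ≥0∞)
              * (((((T : ℕ)) : ℝ≥0∞)) ^ (K-1) * t ^ (K-1)) := by
            rw [show (((T : ℕ)) : ℝ≥0∞) ^ K = (((T : ℕ)) : ℝ≥0∞) ^ (K-1) * (((T : ℕ)) : ℝ≥0∞)
              from by rw [← pow_succ]; congr 1; omega]
            ring
        _ = (((n : ℕ)) : ℝ≥0∞) ^ 2 * (((T : ℕ)) : ℝ≥0∞) := by
            rw [← mul_pow, htcancel, one_pow, mul_one]
  -- sum of singleton masses is 1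
  have hsum1 : ∑ c : V → Bool, μpi {c} = 1 := by
    have huniv : (Set.univ : Set (V → Bool)) = ⋃ c ∈ (Finset.univ : Finset (V → Bool)), {c} := by
      ext c; simp
    rw [← measure_univ (μ := μpi), huniv, measure_biUnion_finset ?_ ?_]
    · intro c _ c' _ hcc'
      exact Set.disjoint_singleton.mpr hcc'
    · exact fun c _ => measurableSet_singleton c
  -- the main bound for partial sums
  have hmain : ∀ K : ℕ, (∑ ℓ ∈ Finset.range K, (Measure.prod μpi μω)
      {x : (V → Bool) × (ℕ → Stmt9.DE G) |
        consensus x.1 (fun i => ((x.2 i : V × V))) ≠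
        consensus x.1 (fun i => ((swapSeq ℓ x.2 i).1))})
      ≤ (3 : ℝ≥0∞) * (((n : ℕ)) : ℝ≥0∞) * (((Δ : ℕ)) : ℝ≥0∞) * t := by
    intro K
    refine (Finset.sum_le_sum (fun ℓ _ => hper ℓ)).trans ?_
    rw [Finset.sum_comm]
    have h2 : ∀ c : V → Bool, (∑ ℓ ∈ Finset.range K, μpi {c} *
        (((6 * Δ * Stmt9.sumD G c ℓ : ℕ) : ℝ≥0∞) * (t ^ (ℓ+2) * (2 * (((n : ℕ)) : ℝ≥0∞)⁻¹))))
        ≤ μpi {c} * ((12 * (((Δ : ℕ)) : ℝ≥0∞) * (((n : ℕ)) : ℝ≥0∞)⁻¹ * t ^ 2)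
            * ((((n : ℕ)) : ℝ≥0∞) ^ 2 * (((T : ℕ)) : ℝ≥0∞) / 4)) := by
      intro c
      have hre : ∀ ℓ ∈ Finset.range K, μpi {c} *
          (((6 * Δ * Stmt9.sumD G c ℓ : ℕ) : ℝ≥0∞) * (t ^ (ℓ+2) * (2 * (((n : ℕ)) : ℝ≥0∞)⁻¹)))
          = μpi {c} * ((12 * (((Δ : ℕ)) : ℝ≥0∞) * (((n : ℕ)) : ℝ≥0∞)⁻¹ * t ^ 2)
              * (((Stmt9.sumD G c ℓ : ℕ) : ℝ≥0∞) * t ^ ℓ)) := by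
        intro ℓ _
        congr 1
        push_cast
        ring
      rw [Finset.sum_congr rfl hre, ← Finset.mul_sum, ← Finset.mul_sum]
      exact mul_le_mul_right (mul_le_mul_right (hDsum c K) _) _
    refine (Finset.sum_le_sum (fun c _ => h2 c)).trans ?_
    rw [← Finset.sum_mul, hsum1, one_mul]
    apply le_of_eq
    have h3 : (12 : ℝ≥0∞) * 4⁻¹ = 3 := by
      rw [show (12 : ℝ≥0∞) = 3 * 4 from by norm_num, mul_assoc,
        ENNReal.mul_inv_cancel (by norm_num) (by norm_num), mul_one]
    have h4 : (((n : ℕ)) : ℝ≥0∞)⁻¹ * (((n : ℕ)) : ℝ≥0∞) ^ 2 = (((n : ℕ)) : ℝ≥0∞) := by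
      rw [pow_two, ← mul_assoc, ENNReal.inv_mul_cancel hnne hnnetop, one_mul]
    have h5 : t ^ 2 * (((T : ℕ)) : ℝ≥0∞) = t := by
      rw [pow_two, mul_assoc, mul_comm t (((T : ℕ) : ℝ≥0∞)), htcancel, mul_one]
    calc (12 * (((Δ : ℕ)) : ℝ≥0∞) * (((n : ℕ)) : ℝ≥0∞)⁻¹ * t ^ 2)
            * ((((n : ℕ)) : ℝ≥0∞) ^ 2 * (((T : ℕ)) : ℝ≥0∞) / 4)
        = ((12 : ℝ≥0∞) * 4⁻¹) * (((Δ : ℕ)) : ℝ≥0∞)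
            * ((((n : ℕ)) : ℝ≥0∞)⁻¹ * (((n : ℕ)) : ℝ≥0∞) ^ 2)
            * (t ^ 2 * (((T : ℕ)) : ℝ≥0∞)) := by
          rw [div_eq_mul_inv]
          ring
      _ = 3 * (((n : ℕ)) : ℝ≥0∞) * (((Δ : ℕ)) : ℝ≥0∞) * t := by
          rw [h3, h4, h5]
          ring
  -- pass to the tsum
  rw [ENNReal.tsum_eq_iSup_sum]
  refine iSup_le fun s => ?_
  obtain ⟨K, hK⟩ := s.exists_nat_subset_range
  refine le_trans (Finset.sum_le_sum_of_subset hK) ((hmain K).trans ?_)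
  -- final: 3 n Δ t ≤ ofReal (3 n Δ / |E|)
  have hofr : ENNReal.ofReal (3 * (Fintype.card V : ℝ) * (G.maxDegree : ℝ)
      / (G.edgeFinset.card : ℝ))
      = ((3 * n * Δ : ℕ) : ℝ≥0∞) / ((G.edgeFinset.card : ℕ) : ℝ≥0∞) := by
    rw [ENNReal.ofReal_div_of_pos (by exact_mod_cast hEpos)]
    congr 1
    · rw [show (3 * (Fintype.card V : ℝ) * (G.maxDegree : ℝ)) = ((3 * n * Δ : ℕ) : ℝ) from by
        push_cast [hn, hΔ]; ring, ENNReal.ofReal_natCast]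
    · rw [ENNReal.ofReal_natCast]
  rw [hofr, div_eq_mul_inv]
  refine mul_le_mul' (le_of_eq (by push_cast; ring)) ?_
  rw [ht]
  refine ENNReal.inv_le_inv' ?_
  calc ((G.edgeFinset.card : ℕ) : ℝ≥0∞) = 1 * ((G.edgeFinset.card : ℕ) : ℝ≥0∞) := by
        rw [one_mul]
    _ ≤ 2 * ((G.edgeFinset.card : ℕ) : ℝ≥0∞) :=
        mul_le_mul_left (by norm_num) _
end

section
/- Let G = (V, E) be a finite connected graph with n ≥ 2 vertices, and let ω = (ω(k))_{k≥1} be an i.i.d. sequence of uniform directed edges. Then almost surely there exists a unique vertex v ∈ V such that for every initial configuration η₀ ∈ {0,1}^V, the consensus opinion of the voter model driven by (η₀, ω) equals η₀(v). -/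
open MeasureTheory ProbabilityTheory
open scoped ENNReal Classical

section Det
variable {V : Type*} [DecidableEq V]

/-- Apply a finite list of edges to a configuration. -/
def applyW (w : List (V × V)) (η : V → Bool) : V → Bool :=
  w.foldl (fun η e => voterUpd e η) η

@[simp] lemma applyW_nil (η : V → Bool) : applyW [] η = η := rfl

lemma applyW_concat (w : List (V × V)) (e : V × V) (η : V → Bool) :
    applyW (w ++ [e]) η = voterUpd e (applyW w η) := by
  simp [applyW, List.foldl_append]

/-- The backward genealogy map: the opinion of `u` at time `k` is the initial opinion of
`backMap ω k u`. -/
def backMap (ω : ℕ → V × V) : ℕ → V → V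
  | 0 => fun v => v
  | k + 1 => fun v => if v = (ω k).2 then backMap ω k (ω k).1 else backMap ω k v

lemma voterProc_eq_back (η0 : V → Bool) (ω : ℕ → V × V) :
    ∀ (k : ℕ) (u : V), voterProc η0 ω k u = η0 (backMap ω k u) := by
  intro k
  induction k with
  | zero => intro u; rfl
  | succ k ih =>
    intro u
    show voterUpd (ω k) (voterProc η0 ω k) u
        = η0 (if u = (ω k).2 then backMap ω k (ω k).1 else backMap ω k u)
    rw [voterUpd, Function.update_apply]
    split_ifs <;> apply ih

lemma backMap_add (ω : ℕ → V × V) (k : ℕ) :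
    ∀ (m : ℕ) (u : V), ∃ u', backMap ω (k + m) u = backMap ω k u' := by
  intro m
  induction m with
  | zero => intro u; exact ⟨u, rfl⟩
  | succ m ih =>
    intro u
    by_cases h : u = (ω (k + m)).2
    · obtain ⟨u', hu⟩ := ih (ω (k + m)).1
      exact ⟨u', by show (if u = (ω (k+m)).2 then _ else _) = _; rw [if_pos h]; exact hu⟩
    · obtain ⟨u', hu⟩ := ih u
      exact ⟨u', by show (if u = (ω (k+m)).2 then _ else _) = _; rw [if_neg h]; exact hu⟩

/-- If the genealogy map is eventually constant with value `v`, then `v` is the unique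
dictator. -/
lemma dictator_of_const {ω : ℕ → V × V} {K : ℕ} {v : V}
    (H : ∀ u, backMap ω K u = v) :
    ∃! v' : V, ∀ η0 : V → Bool, consensus η0 ω = η0 v' := by
  have key : ∀ η0 : V → Bool, consensus η0 ω = η0 v := by
    intro η0
    unfold consensus
    by_cases hv : η0 v = true
    · rw [if_pos ⟨K, fun u => by rw [voterProc_eq_back, H u, hv]⟩, hv]
    · rw [if_neg]
      · simp only [Bool.not_eq_true] at hv; rw [hv]
      · rintro ⟨k, hk⟩
        obtain ⟨u', hu'⟩ := backMap_add ω k K v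
        have h1 : voterProc η0 ω (k + K) v = true := by
          rw [voterProc_eq_back, hu', ← voterProc_eq_back η0 ω k u']; exact hk u'
        obtain ⟨u'', hu''⟩ := backMap_add ω K k v
        have h2 : voterProc η0 ω (k + K) v = η0 v := by
          rw [voterProc_eq_back, Nat.add_comm, hu'', H u'']
        rw [h1] at h2; exact hv h2.symm
  refine ⟨v, key, fun w hw => ?_⟩
  have h1 := hw (fun u => decide (u = v))
  rw [key] at h1
  simpa using h1.symm

lemma voterProc_add (η0 : V → Bool) (ω : ℕ → V × V) (k : ℕ) :
    ∀ j, voterProc η0 ω (k + j) = voterProc (voterProc η0 ω k) (fun i => ω (k + i)) j := by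
  intro j
  induction j with
  | zero => rfl
  | succ j ih =>
    show voterUpd (ω (k + j)) (voterProc η0 ω (k + j)) = _
    rw [ih]; rfl

lemma voterProc_of_agree (η : V → Bool) (ω : ℕ → V × V) (w : List (V × V))
    (h : ∀ (i : ℕ) (hi : i < w.length), ω i = w[i]) :
    voterProc η ω w.length = applyW w η := by
  induction w using List.reverseRecOn with
  | nil => rfl
  | append_singleton w e ih =>
    have hlen : (w ++ [e]).length = w.length + 1 := by simp
    rw [hlen]
    show voterUpd (ω w.length) (voterProc η ω w.length) = _
    have h1 : ∀ (i : ℕ) (hi : i < w.length), ω i = w[i] := by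
      intro i hi
      rw [h i (by simp; omega)]
      exact List.getElem_append_left hi
    have h2 : ω w.length = e := by
      rw [h w.length (by simp)]
      simp
    rw [ih h1, applyW_concat, h2]

end Det

section Graph
variable {V : Type*} [Fintype V] [DecidableEq V] {G : SimpleGraph V}

set_option linter.unusedSectionVars false in
lemma exists_crossing_of_walk {S : Finset V} :
    ∀ {a b : V}, G.Walk a b → a ∈ S → b ∉ S → ∃ x ∈ S, ∃ z, z ∉ S ∧ G.Adj x z := by
  intro a b p
  induction p with
  | nil => intro ha hb; exact absurd ha hb
  | @cons u v' w' h p ih =>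
    intro ha hb
    by_cases h2 : v' ∈ S
    · exact ih h2 hb
    · exact ⟨u, ha, v', h2, h⟩

/-- In a connected graph one can pump the opinion of `c` to all vertices with a fixed
finite word of directed edges. -/
lemma spread (hconn : G.Connected) (c : V) :
    ∃ w : List {e : V × V // G.Adj e.1 e.2},
      ∀ (η : V → Bool) (u : V), applyW (w.map Subtype.val) η u = η c := by
  suffices h : ∀ n (S : Finset V), c ∈ S → (Finset.univ \ S).card = n →
      (∃ w : List {e : V × V // G.Adj e.1 e.2},
        ∀ η u, u ∈ S → applyW (w.map Subtype.val) η u = η c) →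
      ∃ w : List {e : V × V // G.Adj e.1 e.2},
        ∀ (η : V → Bool) (u : V), applyW (w.map Subtype.val) η u = η c by
    refine h _ {c} (Finset.mem_singleton_self c) rfl ⟨[], ?_⟩
    intro η u hu
    rw [Finset.mem_singleton.mp hu]
    rfl
  intro n
  induction n with
  | zero =>
    rintro S hc hS ⟨w, hw⟩
    have hSU : S = Finset.univ := by
      have := Finset.card_eq_zero.mp hS
      have : ∀ u : V, u ∈ S := by
        intro u
        by_contra hu
        have : u ∈ Finset.univ \ S := Finset.mem_sdiff.mpr ⟨Finset.mem_univ u, hu⟩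
        simp_all
      exact Finset.eq_univ_iff_forall.mpr this
    exact ⟨w, fun η u => hw η u (hSU ▸ Finset.mem_univ u)⟩
  | succ n ih =>
    rintro S hc hS ⟨w, hw⟩
    have hy : ∃ y, y ∉ S := by
      have : (Finset.univ \ S).Nonempty := Finset.card_pos.mp (by omega)
      obtain ⟨y, hy⟩ := this
      exact ⟨y, (Finset.mem_sdiff.mp hy).2⟩
    obtain ⟨y, hy⟩ := hy
    obtain ⟨x, hx, z, hz, hxz⟩ :=
      exists_crossing_of_walk ((hconn.preconnected c y).some) hc hy
    refine ih (insert z S) (Finset.mem_insert_of_mem hc) ?_ ?_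
    · have hins : Finset.univ \ insert z S = (Finset.univ \ S).erase z := by
        ext a
        simp only [Finset.mem_sdiff, Finset.mem_univ, true_and, Finset.mem_insert,
          Finset.mem_erase]
        tauto
      rw [hins, Finset.card_erase_of_mem (Finset.mem_sdiff.mpr ⟨Finset.mem_univ z, hz⟩), hS]
      omega
    · refine ⟨w ++ [⟨(x, z), hxz⟩], ?_⟩
      intro η u hu
      rw [List.map_append, List.map_singleton, applyW_concat]
      show Function.update (applyW (w.map Subtype.val) η) z _ u = η c
      rcases Finset.mem_insert.mp hu with h | h
      · rw [h, Function.update_self]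
        exact hw η x hx
      · have hne : u ≠ z := fun e => hz (e ▸ h)
        rw [Function.update_of_ne hne]
        exact hw η u h

end Graph

lemma exists_block {α : Type*} [Fintype α] [MeasurableSpace α] [MeasurableSingletonClass α]
    (μ : Measure (ℕ → α)) [IsProbabilityMeasure μ]
    (hindep : iIndepFun (fun k ω => ω k) μ)
    (hunif : ∀ (k : ℕ) (e : α), μ {ω | ω k = e} = (Fintype.card α : ℝ≥0∞)⁻¹)
    {L : ℕ} (hL : 0 < L) (W : Fin L → α) :
    ∀ᵐ ω ∂μ, ∃ m : ℕ, ∀ i : Fin L, ω (m * L + i.1) = W i := by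
  have hne : Nonempty α := ⟨W ⟨0, hL⟩⟩
  have hNpos : 0 < Fintype.card α := Fintype.card_pos_iff.mpr hne
  set N := Fintype.card α with hNdef
  set q : ℝ≥0∞ := (N : ℝ≥0∞)⁻¹ with hqdef
  -- measure of atoms
  have measAtom : ∀ (n : ℕ) (u : ℕ → α),
      μ (⋂ k ∈ Finset.range n, {ω : ℕ → α | ω k = u k}) = q ^ n := by
    intro n u
    have hmb := hindep.meas_biInter (S := Finset.range n)
      (s := fun i => {ω : ℕ → α | ω i = u i})
      (fun i _ => ⟨{u i}, measurableSet_singleton _, rfl⟩)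
    rw [hmb]
    rw [Finset.prod_congr rfl (fun i _ => hunif i (u i))]
    simp [Finset.prod_const]
  set A : ℕ → Set (ℕ → α) := fun m => {ω | ∀ i : Fin L, ω (m * L + i.1) = W i} with hA
  set r : ℝ≥0∞ := ((N ^ L - 1 : ℕ) : ℝ≥0∞) * q ^ L with hr
  -- key bound
  have key : ∀ M : ℕ, μ (⋂ m : Fin M, (A m.1)ᶜ) ≤ r ^ M := by
    intro M
    have hidx : ∀ (m : Fin M) (i : Fin L), m.1 * L + i.1 < M * L := by
      intro m i
      calc m.1 * L + i.1 < m.1 * L + L := by omega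
        _ = (m.1 + 1) * L := by ring
        _ ≤ M * L := Nat.mul_le_mul_right L m.2
    set Bad : Finset (Fin (M * L) → α) :=
      Finset.univ.filter
        (fun u => ∀ m : Fin M, ∃ i : Fin L, u ⟨m.1 * L + i.1, hidx m i⟩ ≠ W i) with hBad
    set C : (Fin (M * L) → α) → Set (ℕ → α) :=
      fun u => ⋂ k : Fin (M * L), {ω : ℕ → α | ω k.1 = u k} with hC
    have hMeasC : ∀ u, μ (C u) = q ^ (M * L) := by
      intro u
      set u' : ℕ → α := fun k => if h : k < M * L then u ⟨k, h⟩ else Classical.arbitrary α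
        with hu'
      have hCu : C u = ⋂ k ∈ Finset.range (M * L), {ω : ℕ → α | ω k = u' k} := by
        ext ω
        simp only [hC, Set.mem_iInter, Set.mem_setOf_eq, Finset.mem_range]
        constructor
        · intro h k hk
          rw [show u' k = u ⟨k, hk⟩ from dif_pos hk]
          exact h ⟨k, hk⟩
        · intro h k
          have h1 : u' k.1 = u k := by rw [hu']; simp only [k.2, dif_pos]
          rw [← h1]
          exact h k.1 k.2
      rw [hCu, measAtom]
    have hUnion : (⋂ m : Fin M, (A m.1)ᶜ) = ⋃ u ∈ Bad, C u := by
      ext ω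
      simp only [Set.mem_iInter, Set.mem_compl_iff, Set.mem_iUnion]
      constructor
      · intro h
        refine ⟨fun k => ω k.1, ?_, ?_⟩
        · rw [hBad, Finset.mem_filter]
          refine ⟨Finset.mem_univ _, fun m => ?_⟩
          have hm := h m
          rw [hA] at hm
          simp only [Set.mem_setOf_eq, not_forall] at hm
          obtain ⟨i, hi⟩ := hm
          exact ⟨i, hi⟩
        · exact Set.mem_iInter.mpr fun k => rfl
      · rintro ⟨u, hu, hωu⟩ m hωA
        rw [hBad, Finset.mem_filter] at hu
        obtain ⟨i, hi⟩ := hu.2 m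
        apply hi
        have h1 : ω (m.1 * L + i.1) = u ⟨m.1 * L + i.1, hidx m i⟩ :=
          Set.mem_iInter.mp hωu ⟨m.1 * L + i.1, hidx m i⟩
        rw [← h1]
        exact hωA i
    have hDisj : (↑Bad : Set (Fin (M * L) → α)).PairwiseDisjoint C := by
      intro u _ u' _ hne'
      refine Set.disjoint_left.mpr fun ω hωu hωu' => hne' ?_
      funext k
      exact (Set.mem_iInter.mp hωu k).symm.trans (Set.mem_iInter.mp hωu' k)
    have hMeas : ∀ u ∈ Bad, MeasurableSet (C u) := by
      intro u _
      refine MeasurableSet.iInter fun k => ?_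
      have hpre : {ω : ℕ → α | ω k.1 = u k} = (fun ω : ℕ → α => ω k.1) ⁻¹' {u k} := rfl
      rw [hpre]
      exact (measurable_pi_apply k.1) (measurableSet_singleton (u k))
    have hcard : Bad.card ≤ (N ^ L - 1) ^ M := by
      classical
      set t : Finset (Fin M → Fin L → α) :=
        Finset.univ.filter (fun g => ∀ m, g m ≠ W) with ht
      set Φ : (Fin (M * L) → α) → (Fin M → Fin L → α) :=
        fun u m i => u ⟨m.1 * L + i.1, hidx m i⟩ with hΦ
      have hmaps : ∀ u ∈ Bad, Φ u ∈ t := by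
        intro u hu
        rw [hBad, Finset.mem_filter] at hu
        rw [ht, Finset.mem_filter]
        refine ⟨Finset.mem_univ _, fun m hg => ?_⟩
        obtain ⟨i, hi⟩ := hu.2 m
        exact hi (congrFun hg i)
      have hinj : Set.InjOn Φ ↑Bad := by
        intro u _ u' _ h
        funext k
        have hm : k.1 / L < M := (Nat.div_lt_iff_lt_mul hL).mpr k.2
        have hi : k.1 % L < L := Nat.mod_lt _ hL
        have hk : (⟨(⟨k.1 / L, hm⟩ : Fin M).1 * L + (⟨k.1 % L, hi⟩ : Fin L).1,
            hidx ⟨k.1 / L, hm⟩ ⟨k.1 % L, hi⟩⟩ : Fin (M * L)) = k :=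
          Fin.ext (Nat.div_add_mod' k.1 L)
        have := congrFun (congrFun h ⟨k.1 / L, hm⟩) ⟨k.1 % L, hi⟩
        rw [hΦ] at this
        simp only at this
        rw [hk] at this
        exact this
      have hle := Finset.card_le_card_of_injOn Φ hmaps hinj
      have hcardt : t.card = (N ^ L - 1) ^ M := by
        rw [ht, ← Fintype.card_subtype]
        rw [Fintype.card_congr (Equiv.subtypePiEquivPi (p := fun _ (h : Fin L → α) => h ≠ W))]
        rw [Fintype.card_pi]
        have h1 : Fintype.card {h : Fin L → α // h ≠ W} = N ^ L - 1 := by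
          have h2 := Fintype.card_subtype_compl (fun h : Fin L → α => h = W)
          have h3 : Fintype.card {h : Fin L → α // h = W} = 1 := Fintype.card_subtype_eq W
          rw [h3] at h2
          rw [h2, Fintype.card_fun]
          simp [hNdef]
        simp [h1]
      rw [hcardt] at hle
      exact hle
    calc μ (⋂ m : Fin M, (A m.1)ᶜ) = ∑ u ∈ Bad, μ (C u) := by
          rw [hUnion, measure_biUnion_finset hDisj hMeas]
      _ = Bad.card * q ^ (M * L) := by
          rw [Finset.sum_congr rfl fun u _ => hMeasC u, Finset.sum_const, nsmul_eq_mul]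
      _ ≤ ((N ^ L - 1) ^ M : ℕ) * q ^ (M * L) := by
          gcongr
      _ = r ^ M := by
          rw [hr, mul_pow, Nat.cast_pow, mul_comm M L, pow_mul]
  -- r < 1
  have hrlt : r < 1 := by
    have h1 : q ^ L = ((N ^ L : ℕ) : ℝ≥0∞)⁻¹ := by
      rw [hqdef, ← ENNReal.inv_pow]
      push_cast
      rfl
    have hb0 : ((N ^ L : ℕ) : ℝ≥0∞) ≠ 0 := by
      simp only [ne_eq, Nat.cast_eq_zero]
      positivity
    have hbt : ((N ^ L : ℕ) : ℝ≥0∞) ≠ ∞ := ENNReal.natCast_ne_top _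
    rw [hr, h1, ← div_eq_mul_inv]
    rw [ENNReal.div_lt_iff (Or.inl hb0) (Or.inl hbt), one_mul]
    have : N ^ L - 1 < N ^ L := by
      have : 0 < N ^ L := Nat.pow_pos hNpos
      omega
    exact_mod_cast this
  -- conclusion
  have hcompl : μ (⋃ m : ℕ, A m)ᶜ = 0 := by
    have hle : ∀ M : ℕ, μ (⋃ m : ℕ, A m)ᶜ ≤ r ^ M := by
      intro M
      refine le_trans (measure_mono ?_) (key M)
      intro ω hω
      simp only [Set.mem_compl_iff, Set.mem_iUnion, not_exists] at hω
      exact Set.mem_iInter.mpr fun m => hω m.1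
    have h0 := ge_of_tendsto' (ENNReal.tendsto_pow_atTop_nhds_zero_of_lt_one hrlt) hle
    simpa using h0
  have hae : ∀ᵐ ω ∂μ, ω ∈ ⋃ m : ℕ, A m := by
    rw [ae_iff]
    exact hcompl
  filter_upwards [hae] with ω hω
  obtain ⟨m, hm⟩ := Set.mem_iUnion.mp hω
  exact ⟨m, hm⟩


/-- For a finite connected graph with `n ≥ 2` vertices and i.i.d. uniform
edge selections, almost surely there is a unique vertex `v` (the dictator) such that for
every initial configuration the consensus opinion equals the initial opinion of `v`. -/
theorem stmt10 {V : Type*} [Fintype V] [DecidableEq V]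
    [MeasurableSpace V] [MeasurableSingletonClass V]
    (G : SimpleGraph V) [DecidableRel G.Adj]
    (hconn : G.Connected) (hcard : 2 ≤ Fintype.card V)
    (μω : Measure (ℕ → {e : V × V // G.Adj e.1 e.2})) [IsProbabilityMeasure μω]
    (hindep : iIndepFun (fun k ω => ω k) μω)
    (hunif : ∀ (k : ℕ) (e : {e : V × V // G.Adj e.1 e.2}),
      μω {ω | ω k = e} = (2 * G.edgeFinset.card : ℝ≥0∞)⁻¹) :
    ∀ᵐ ω ∂μω, ∃! v : V, ∀ η0 : V → Bool,
      consensus η0 (fun i => ((ω i : V × V))) = η0 v := by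
  classical
  have hV : Nonempty V := Fintype.card_pos_iff.mp (by omega)
  obtain ⟨c⟩ := hV
  obtain ⟨w, hw⟩ := spread (G := G) hconn c
  set L := w.length with hLdef
  have hL : 0 < L := by
    rcases Nat.eq_zero_or_pos L with h0 | h
    · exfalso
      have hwnil : w = [] := List.length_eq_zero_iff.mp h0
      obtain ⟨a, b, hab⟩ :=
        Fintype.exists_pair_of_one_lt_card (by omega : 1 < Fintype.card V)
      have h1 := hw (fun x => decide (x = a)) a
      have h2 := hw (fun x => decide (x = b)) b
      rw [hwnil] at h1 h2
      simp only [List.map_nil, applyW_nil] at h1 h2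
      have hca : c = a := by simpa using h1.symm
      have hcb : c = b := by simpa using h2.symm
      exact hab (hca ▸ hcb)
    · exact h
  -- uniform probability over the directed-edge type
  have hcardα : Fintype.card {e : V × V // G.Adj e.1 e.2} = 2 * G.edgeFinset.card := by
    have eqv : {e : V × V // G.Adj e.1 e.2} ≃ G.Dart :=
      { toFun := fun e => ⟨e.1, e.2⟩
        invFun := fun d => ⟨d.toProd, d.adj⟩
        left_inv := fun e => rfl
        right_inv := fun d => rfl }
    rw [Fintype.card_congr eqv, SimpleGraph.dart_card_eq_twice_card_edges]
  have hunif' : ∀ (k : ℕ) (e : {e : V × V // G.Adj e.1 e.2}),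
      μω {ω | ω k = e} = (Fintype.card {e : V × V // G.Adj e.1 e.2} : ℝ≥0∞)⁻¹ := by
    intro k e
    rw [hunif k e, hcardα]
    congr 1
    push_cast
    ring
  have hblock := exists_block μω hindep hunif' hL (fun i => w.get i)
  filter_upwards [hblock] with ω hω
  obtain ⟨m, hm⟩ := hω
  set ω' : ℕ → V × V := fun i => ((ω i : V × V)) with hω'
  have hlenv : (w.map Subtype.val).length = L := by simp [hLdef]
  have hagree : ∀ (i : ℕ) (hi : i < (w.map Subtype.val).length),
      ω' (m * L + i) = (w.map Subtype.val)[i] := by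
    intro i hi
    rw [List.getElem_map]
    have hi' : i < L := by simpa using hi
    have h3 := hm ⟨i, hi'⟩
    rw [hω']
    simp only []
    rw [h3]
    rfl
  have h2 : voterProc (voterProc (fun _ => true) ω' (m * L)) (fun j => ω' (m * L + j))
      ((w.map Subtype.val).length) = applyW (w.map Subtype.val)
        (voterProc (fun _ => true) ω' (m * L)) :=
    voterProc_of_agree _ _ _ hagree
  have hKey : ∀ (η0 : V → Bool) (u : V),
      voterProc η0 ω' (m * L + L) u = η0 (backMap ω' (m * L) c) := by
    intro η0 u
    have h2' : voterProc (voterProc η0 ω' (m * L)) (fun j => ω' (m * L + j))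
        ((w.map Subtype.val).length)
        = applyW (w.map Subtype.val) (voterProc η0 ω' (m * L)) :=
      voterProc_of_agree _ _ _ hagree
    rw [hlenv] at h2'
    calc voterProc η0 ω' (m * L + L) u
        = voterProc (voterProc η0 ω' (m * L)) (fun j => ω' (m * L + j)) L u := by
          rw [voterProc_add]
      _ = applyW (w.map Subtype.val) (voterProc η0 ω' (m * L)) u := by rw [h2']
      _ = voterProc η0 ω' (m * L) c := hw _ u
      _ = η0 (backMap ω' (m * L) c) := voterProc_eq_back _ _ _ _
  have hconst : ∀ u, backMap ω' (m * L + L) u = backMap ω' (m * L) c := by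
    intro u
    have h4 := hKey (fun x => decide (x = backMap ω' (m * L) c)) u
    rw [voterProc_eq_back] at h4
    simpa using h4
  exact dictator_of_const hconst
end

section
/- Let s > 0 and λ > 0. Let X be a real random variable with the centered Gaussian distribution of variance s, and let γ be an independent random variable with the exponential distribution of rate 2λ. Then P(X ≥ γ) ≤ 2λ√s · (1 + e^{2λ²s}). -/
open MeasureTheory ProbabilityTheory
open scoped ENNReal NNReal


section Aux
open Real Set

lemma integral_mul_exp_neg_mul_sq_Ioi' {b : ℝ} (hb : 0 < b) :
    ∫ x in Set.Ioi (0:ℝ), x * Real.exp (-b * x ^ 2) = (2*b)⁻¹ := by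
  have A : ∀ x : ℝ, HasDerivAt (fun x => -(2*b)⁻¹ * exp (-b * x^2)) (x * exp (-b * x^2)) x := by
    intro x
    convert ((hasDerivAt_pow 2 x).const_mul (-b)).exp.const_mul (-(2*b)⁻¹) using 1
    · rfl
    · rfl
    field_simp
    ring
  have B : Filter.Tendsto (fun y : ℝ => -(2*b)⁻¹ * exp (-b * y^2)) Filter.atTop
      (nhds (-(2*b)⁻¹ * 0)) := by
    refine Filter.Tendsto.const_mul _ ?_
    exact Real.tendsto_exp_atBot.comp
      ((Filter.tendsto_pow_atTop two_ne_zero).const_mul_atTop_of_neg (neg_lt_zero.2 hb))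
  have := integral_Ioi_of_hasDerivAt_of_tendsto' (a := 0) (fun x _ => A x)
    (integrable_mul_exp_neg_mul_sq hb).integrableOn B
  simpa using this

lemma expMeasure_Iic' {r : ℝ} (hr : 0 < r) (x : ℝ) :
    expMeasure r (Set.Iic x) = ENNReal.ofReal (if 0 ≤ x then 1 - Real.exp (-(r * x)) else 0) := by
  rw [expMeasure, gammaMeasure, withDensity_apply _ measurableSet_Iic,
    ← lintegral_exponentialPDF_eq_antiDeriv hr x]
  rfl

lemma gauss_pos_part {s : ℝ≥0} (hs : 0 < s) :
    ∫⁻ x, ENNReal.ofReal (max x 0) ∂(gaussianReal 0 s)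
      = ENNReal.ofReal ((s : ℝ) / Real.sqrt (2 * π * s)) := by
  have hs' : (0:ℝ) < s := hs
  have hb : (0:ℝ) < (2*(s:ℝ))⁻¹ := by positivity
  set b : ℝ := (2*(s:ℝ))⁻¹ with hbdef
  set c : ℝ := (Real.sqrt (2*π*s))⁻¹ with hcdef
  have hc : 0 ≤ c := by positivity
  have hpdf : ∀ x : ℝ, gaussianPDFReal 0 s x = c * exp (-b * x^2) := by
    intro x
    rw [gaussianPDFReal]
    congr 1
    rw [sub_zero]
    simp only [hbdef]
    field_simp
  have hmeas : Measurable fun x : ℝ => ENNReal.ofReal (max x 0) :=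
    (measurable_id.max measurable_const).ennreal_ofReal
  rw [gaussianReal_of_var_ne_zero _ hs.ne',
    lintegral_withDensity_eq_lintegral_mul _ (measurable_gaussianPDF 0 s) hmeas]
  have heq : ∀ x : ℝ, (gaussianPDF 0 s * fun x => ENNReal.ofReal (max x 0)) x
      = ENNReal.ofReal (c * (exp (-b * x^2) * max x 0)) := by
    intro x
    simp only [Pi.mul_apply, gaussianPDF, hpdf x]
    rw [← ENNReal.ofReal_mul (by positivity), mul_assoc]
  simp_rw [heq]
  have hint : Integrable (fun x : ℝ => c * (exp (-b * x^2) * max x 0)) := by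
    refine Integrable.const_mul ?_ c
    refine (integrable_mul_exp_neg_mul_sq hb).abs.mono'
      ((((continuous_const.mul (continuous_pow 2)).rexp).mul
        (continuous_id.max continuous_const)).aestronglyMeasurable) ?_
    filter_upwards with x
    rw [Real.norm_eq_abs, abs_of_nonneg (by positivity), abs_mul,
      abs_of_nonneg (exp_pos _).le]
    have h1 : max x 0 ≤ |x| := max_le (le_abs_self x) (abs_nonneg x)
    calc exp (-b * x^2) * max x 0 ≤ exp (-b * x^2) * |x| := by
          exact mul_le_mul_of_nonneg_left h1 (exp_pos _).le
      _ = |x| * exp (-b * x^2) := by ring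
  rw [← ofReal_integral_eq_lintegral_ofReal hint (by filter_upwards with x; positivity)]
  congr 1
  rw [integral_const_mul]
  have hind : (fun x : ℝ => exp (-b * x^2) * max x 0)
      = Set.indicator (Set.Ioi 0) (fun x => x * exp (-b * x^2)) := by
    funext x
    by_cases hx : 0 < x
    · simp only [Set.indicator_apply, Set.mem_Ioi, if_pos hx, max_eq_left hx.le]; ring
    · simp only [Set.indicator_apply, Set.mem_Ioi, if_neg hx, max_eq_right (not_lt.mp hx),
        mul_zero]
  rw [hind, integral_indicator measurableSet_Ioi, integral_mul_exp_neg_mul_sq_Ioi' hb]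
  have h2b : (2*b)⁻¹ = (s:ℝ) := by
    rw [hbdef]
    field_simp
  rw [h2b, hcdef, div_eq_inv_mul]


end Aux

/-- If `X` is a centered Gaussian random variable of variance `s > 0` and
`γ` is an independent exponential random variable of rate `2λ` (`λ > 0`), then
`P(X ≥ γ) ≤ 2λ√s (1 + e^{2λ²s})`. -/
theorem stmt14
    {Ω : Type*} {m0 : MeasurableSpace Ω} {μ : Measure Ω} [IsProbabilityMeasure μ]
    (s : ℝ≥0) (hs : 0 < s) (r : ℝ) (hr : 0 < r)
    (X γ : Ω → ℝ) (hX : Measurable X) (hγ : Measurable γ)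
    (hXd : Measure.map X μ = gaussianReal 0 s)
    (hγd : Measure.map γ μ = expMeasure (2 * r))
    (hind : IndepFun X γ μ) :
    μ {ω | γ ω ≤ X ω} ≤
      ENNReal.ofReal (2 * r * Real.sqrt s * (1 + Real.exp (2 * r ^ 2 * s))) := by
  have hs' : (0:ℝ) < s := hs
  have h2r : (0:ℝ) < 2 * r := by linarith
  haveI : IsProbabilityMeasure (expMeasure (2*r)) := isProbabilityMeasure_expMeasure h2r
  have hmap : μ.map (fun ω => (X ω, γ ω)) = (gaussianReal 0 s).prod (expMeasure (2*r)) := by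
    rw [← hXd, ← hγd]
    exact (indepFun_iff_map_prod_eq_prod_map_map hX.aemeasurable hγ.aemeasurable).mp hind
  have hA : MeasurableSet {p : ℝ × ℝ | p.2 ≤ p.1} := measurableSet_le measurable_snd measurable_fst
  have step1 : μ {ω | γ ω ≤ X ω}
      = ∫⁻ x, expMeasure (2*r) (Set.Iic x) ∂(gaussianReal 0 s) := by
    have e1 : μ {ω | γ ω ≤ X ω}
        = ((gaussianReal 0 s).prod (expMeasure (2*r))) {p : ℝ × ℝ | p.2 ≤ p.1} := by
      rw [← hmap, Measure.map_apply (hX.prodMk hγ) hA]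
      rfl
    rw [e1, Measure.prod_apply hA]
    rfl
  have step2 : ∀ x : ℝ, expMeasure (2*r) (Set.Iic x)
      ≤ ENNReal.ofReal (2*r) * ENNReal.ofReal (max x 0) := by
    intro x
    rw [expMeasure_Iic' h2r, ← ENNReal.ofReal_mul h2r.le]
    refine ENNReal.ofReal_le_ofReal ?_
    split_ifs with hx
    · have h1 : -(2*r*x) + 1 ≤ Real.exp (-(2*r*x)) := Real.add_one_le_exp _
      have h2 : max x 0 = x := max_eq_left hx
      nlinarith
    · positivity
  calc μ {ω | γ ω ≤ X ω} = ∫⁻ x, expMeasure (2*r) (Set.Iic x) ∂(gaussianReal 0 s) := step1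
    _ ≤ ∫⁻ x, ENNReal.ofReal (2*r) * ENNReal.ofReal (max x 0) ∂(gaussianReal 0 s) :=
        lintegral_mono step2
    _ = ENNReal.ofReal (2*r) * ∫⁻ x, ENNReal.ofReal (max x 0) ∂(gaussianReal 0 s) :=
        lintegral_const_mul _ ((measurable_id.max measurable_const).ennreal_ofReal)
    _ = ENNReal.ofReal (2*r) * ENNReal.ofReal ((s : ℝ) / Real.sqrt (2 * Real.pi * s)) := by
        rw [gauss_pos_part hs]
    _ ≤ ENNReal.ofReal (2 * r * Real.sqrt s * (1 + Real.exp (2 * r ^ 2 * s))) := by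
        rw [← ENNReal.ofReal_mul h2r.le]
        refine ENNReal.ofReal_le_ofReal ?_
        have hss : (0:ℝ) < Real.sqrt s := Real.sqrt_pos.2 hs'
        have hmono : Real.sqrt s ≤ Real.sqrt (2*Real.pi*s) := by
          refine Real.sqrt_le_sqrt ?_
          nlinarith [Real.pi_gt_three]
        have h1 : (s:ℝ) / Real.sqrt (2*Real.pi*s) ≤ Real.sqrt s := by
          calc (s:ℝ) / Real.sqrt (2*Real.pi*s) ≤ (s:ℝ) / Real.sqrt s := by
                gcongr
            _ = Real.sqrt s := Real.div_sqrt
        have h2 : (0:ℝ) < Real.exp (2 * r ^ 2 * s) := Real.exp_pos _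
        calc 2 * r * ((s:ℝ) / Real.sqrt (2*Real.pi*s)) ≤ 2 * r * Real.sqrt s :=
              mul_le_mul_of_nonneg_left h1 h2r.le
          _ ≤ 2 * r * Real.sqrt s * (1 + Real.exp (2 * r ^ 2 * s)) :=
              le_mul_of_one_le_right (by positivity) (by linarith)
end

section
/- Let j ≥ 2 be an integer, λ > 0, s > 0, and let γ be a random variable with the Gamma distribution of shape j and rate 2λ. Then P(γ ≤ √s · log j) ≤ e · (1 + 1/(2λ√s · log j))^{−j}. -/
open MeasureTheory ProbabilityTheory
open scoped ENNReal

/-- If `γ` has the Gamma distribution of integer shape `j ≥ 2` and rate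
`2λ` (`λ > 0`), then for every `s > 0`,
`P(γ ≤ √s log j) ≤ e (1 + 1/(2λ√s log j))^{-j}`. -/
theorem stmt16
    {Ω : Type*} {m0 : MeasurableSpace Ω} {μ : Measure Ω} [IsProbabilityMeasure μ]
    (j : ℕ) (hj : 2 ≤ j) (r : ℝ) (hr : 0 < r) (s : ℝ) (hs : 0 < s)
    (γ : Ω → ℝ) (hγ : Measurable γ)
    (hγd : Measure.map γ μ = gammaMeasure (j : ℝ) (2 * r)) :
    μ {ω | γ ω ≤ Real.sqrt s * Real.log j} ≤
      ENNReal.ofReal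
        (Real.exp 1 * ((1 + 1 / (2 * r * Real.sqrt s * Real.log j)) ^ j)⁻¹) := by
  have hj1 : (1 : ℝ) < j := by exact_mod_cast (by omega : 1 < j)
  have hlog : 0 < Real.log j := Real.log_pos hj1
  set t : ℝ := Real.sqrt s * Real.log j with ht_def
  have ht : 0 < t := mul_pos (Real.sqrt_pos.mpr hs) hlog
  set R : ℝ := 2 * r with hR_def
  have hR : 0 < R := by positivity
  set R' : ℝ := R + 1 / t with hR'_def
  have hR' : 0 < R' := by positivity
  set c : ℝ := Real.exp 1 * ((1 + 1 / (2 * r * Real.sqrt s * Real.log j)) ^ j)⁻¹ with hc_def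
  have hRt : 2 * r * Real.sqrt s * Real.log j = R * t := by rw [ht_def, hR_def]; ring
  have hbase : 1 + 1 / (2 * r * Real.sqrt s * Real.log j) = R' / R := by
    rw [hRt, hR'_def]; field_simp
  have hc_eq : c = Real.exp 1 * (R ^ j * (R' ^ j)⁻¹) := by
    rw [hc_def, hbase, div_pow, inv_div, div_eq_mul_inv]
  have hc0 : 0 ≤ c := by
    rw [hc_eq]; positivity
  -- pointwise bound on Iic t
  have key : ∀ x ∈ Set.Iic t,
      gammaPDF (j : ℝ) R x ≤ ENNReal.ofReal c * gammaPDF (j : ℝ) R' x := by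
    intro x hx
    rcases lt_or_ge x 0 with hx0 | hx0
    · rw [gammaPDF_of_neg hx0, gammaPDF_of_neg hx0]
      simp
    · rw [gammaPDF_of_nonneg hx0, gammaPDF_of_nonneg hx0, ← ENNReal.ofReal_mul hc0]
      apply ENNReal.ofReal_le_ofReal
      have hrpow : ∀ y : ℝ, y ^ (j : ℝ) = y ^ j := fun y => Real.rpow_natCast y j
      have hΓ : 0 < Real.Gamma j := Real.Gamma_pos_of_pos (by positivity)
      have hexp2 : Real.exp (-(R' * x)) = Real.exp (-(R * x)) * Real.exp (-(x / t)) := by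
        rw [← Real.exp_add]
        congr 1
        rw [hR'_def]
        field_simp
        ring
      have keyid : c * (R' ^ (j:ℝ) / Real.Gamma j * x ^ ((j:ℝ) - 1) * Real.exp (-(R' * x)))
          = Real.exp (1 - x / t)
            * (R ^ (j:ℝ) / Real.Gamma j * x ^ ((j:ℝ) - 1) * Real.exp (-(R * x))) := by
        rw [hc_eq, hexp2, hrpow R, hrpow R',
          show Real.exp (1 - x / t) = Real.exp 1 * Real.exp (-(x / t)) by
            rw [← Real.exp_add]; ring_nf]
        have hR'j : (R' : ℝ) ^ j ≠ 0 := by positivity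
        field_simp
      rw [keyid]
      have h1le : (1 : ℝ) ≤ Real.exp (1 - x / t) := by
        apply Real.one_le_exp
        have : x / t ≤ 1 := (div_le_one ht).mpr hx
        linarith
      have hpdf0 : 0 ≤ R ^ (j:ℝ) / Real.Gamma j * x ^ ((j:ℝ) - 1) * Real.exp (-(R * x)) := by
        positivity
      nlinarith
  -- integrate
  have hset : {ω | γ ω ≤ t} = γ ⁻¹' Set.Iic t := rfl
  calc μ {ω | γ ω ≤ t} = ∫⁻ x in Set.Iic t, gammaPDF (j : ℝ) R x := by
        rw [hset, ← Measure.map_apply hγ measurableSet_Iic, hγd, gammaMeasure,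
          withDensity_apply _ measurableSet_Iic]
    _ ≤ ∫⁻ x in Set.Iic t, ENNReal.ofReal c * gammaPDF (j : ℝ) R' x :=
        setLIntegral_mono (by
          exact Measurable.const_mul (((measurable_gammaPDFReal _ _).ennreal_ofReal)) _) key
    _ = ENNReal.ofReal c * ∫⁻ x in Set.Iic t, gammaPDF (j : ℝ) R' x := by
        have hm : Measurable (gammaPDF (j : ℝ) R') :=
          (measurable_gammaPDFReal _ _).ennreal_ofReal
        exact lintegral_const_mul _ hm
    _ ≤ ENNReal.ofReal c * 1 := by
        gcongr
        rw [← lintegral_gammaPDF_eq_one (a := (j:ℝ)) (by positivity) hR']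
        exact setLIntegral_le_lintegral _ _
    _ = ENNReal.ofReal c := mul_one _
end

section
/- Let s > 0 and λ > 0. For each integer j ≥ 2, let X_j be a real random variable with the centered Gaussian distribution of variance s and let γ_j be an independent random variable with the Gamma distribution of shape j and rate 2λ. Then ∑_{j=2}^∞ P(X_j ≥ γ_j) ≤ 100 λ² s + λ√s. -/
open MeasureTheory ProbabilityTheory
open scoped ENNReal NNReal

section Aux
open Real Set
open scoped Nat
open MeasureTheory ProbabilityTheory Real Set
open scoped ENNReal NNReal Nat

lemma real_second_moment (s : ℝ≥0) (hs : 0 < s) :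
    ∫ x : ℝ, gaussianPDFReal 0 s x * x ^ 2 = s := by
  have hs' : (0:ℝ) < (s:ℝ) := hs
  have hb : (0:ℝ) < (2 * (s:ℝ))⁻¹ := by positivity
  have h2s : (0:ℝ) < 2 * (s:ℝ) := by positivity
  have step1 : ∫ x : ℝ, gaussianPDFReal 0 s x * x ^ 2
      = (√(2 * π * s))⁻¹ * ∫ x : ℝ, x ^ 2 * rexp (-(2 * (s:ℝ))⁻¹ * x ^ 2) := by
    rw [← integral_const_mul]
    congr 1 with x
    rw [gaussianPDFReal]
    rw [show -(x - 0) ^ 2 / (2 * (s:ℝ)) = -(2 * (s:ℝ))⁻¹ * x ^ 2 by ring]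
    ring
  have step2 : ∫ x : ℝ, x ^ 2 * rexp (-(2 * (s:ℝ))⁻¹ * x ^ 2)
      = 2 * ∫ x in Ioi (0:ℝ), x ^ 2 * rexp (-(2 * (s:ℝ))⁻¹ * x ^ 2) := by
    rw [← integral_comp_abs (f := fun y => y ^ 2 * rexp (-(2 * (s:ℝ))⁻¹ * y ^ 2))]
    congr 1 with x
    rw [sq_abs]
  have step3 : ∫ x in Ioi (0:ℝ), x ^ 2 * rexp (-(2 * (s:ℝ))⁻¹ * x ^ 2)
      = (2 * (s:ℝ))⁻¹ ^ (-(2 + 1) / 2 : ℝ) * (1 / 2) * Real.Gamma ((2 + 1) / 2) := by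
    rw [← integral_rpow_mul_exp_neg_mul_rpow (by norm_num : (0:ℝ) < 2)
      (by norm_num : (-1:ℝ) < 2) hb]
    refine setIntegral_congr_fun measurableSet_Ioi (fun x hx => ?_)
    rw [show ((2:ℝ)) = ((2:ℕ):ℝ) by norm_num, Real.rpow_natCast]
  rw [step1, step2, step3]
  have hG : Real.Gamma (((2:ℝ) + 1) / 2) = √π / 2 := by
    rw [show ((2:ℝ) + 1) / 2 = 1/2 + 1 by norm_num, Real.Gamma_add_one (by norm_num),
      Real.Gamma_one_half_eq]
    ring
  have hrpow : ((2 * (s:ℝ))⁻¹) ^ (-(2 + 1) / 2 : ℝ) = (2 * (s:ℝ)) * √(2 * (s:ℝ)) := by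
    rw [Real.inv_rpow h2s.le, ← Real.rpow_neg h2s.le,
      show (-(-(2 + 1) / 2) : ℝ) = 1 + 1/2 by norm_num, Real.rpow_add h2s,
      Real.rpow_one, ← Real.sqrt_eq_rpow]
  rw [hG, hrpow, show 2 * π * (s:ℝ) = π * (2 * (s:ℝ)) by ring,
    Real.sqrt_mul pi_pos.le]
  have hπ : √π ≠ 0 := by positivity
  have h2s' : √(2 * (s:ℝ)) ≠ 0 := by positivity
  field_simp

lemma lintegral_sq_gaussian (s : ℝ≥0) (hs : 0 < s) :
    ∫⁻ x, ENNReal.ofReal (x ^ 2) ∂(gaussianReal 0 s) = ENNReal.ofReal s := by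
  have hb : (0:ℝ) < (2 * (s:ℝ))⁻¹ := by positivity
  have hint : Integrable (fun x : ℝ => gaussianPDFReal 0 s x * x ^ 2) := by
    have h1 : Integrable (fun x : ℝ => x ^ 2 * rexp (-(2 * (s:ℝ))⁻¹ * x ^ 2)) := by
      have := integrable_rpow_mul_exp_neg_mul_sq hb (by norm_num : (-1:ℝ) < ((2:ℕ):ℝ))
      simpa [Real.rpow_natCast] using this
    have h2 := h1.const_mul (√(2 * π * (s:ℝ)))⁻¹
    refine h2.congr (Filter.Eventually.of_forall fun x => ?_)
    simp only [gaussianPDFReal]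
    rw [show -(x - 0) ^ 2 / (2 * (s:ℝ)) = -(2 * (s:ℝ))⁻¹ * x ^ 2 by ring]
    ring
  rw [gaussianReal_of_var_ne_zero _ hs.ne',
    lintegral_withDensity_eq_lintegral_mul _ (measurable_gaussianPDF 0 s)
      (measurable_id'.pow_const 2).ennreal_ofReal]
  have heq : ∀ x : ℝ, (gaussianPDF 0 s * fun x => ENNReal.ofReal (x ^ 2)) x
      = ENNReal.ofReal (gaussianPDFReal 0 s x * x ^ 2) := fun x => by
    rw [Pi.mul_apply, gaussianPDF,
      ← ENNReal.ofReal_mul (gaussianPDFReal_nonneg 0 s x)]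
  simp_rw [heq]
  rw [← ofReal_integral_eq_lintegral_ofReal hint
    (Filter.Eventually.of_forall fun x =>
      mul_nonneg (gaussianPDFReal_nonneg 0 s x) (sq_nonneg x)),
    real_second_moment s hs]


lemma summable_shift (w : ℝ) :
    Summable (fun k : ℕ => w ^ (k+1) / ((k+1)! : ℝ)) :=
  (summable_nat_add_iff 1).mpr (Real.summable_pow_div_factorial w)

lemma tsum_exp_shift (w : ℝ) :
    ∑' k : ℕ, w ^ (k+1) / ((k+1)! : ℝ) = Real.exp w - 1 := by
  have hsum : Summable (fun n : ℕ => w ^ n / (n ! : ℝ)) := Real.summable_pow_div_factorial w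
  have hexp : Real.exp w = ∑' n : ℕ, w ^ n / (n ! : ℝ) := by
    rw [Real.exp_eq_exp_ℝ, NormedSpace.exp_eq_tsum_div]
  have h0 := hsum.tsum_eq_zero_add
  simp only [pow_zero, Nat.factorial_zero, Nat.cast_one, div_one] at h0
  rw [← hexp] at h0
  linarith [h0]

noncomputable def eqv : ℕ ≃ {j : ℕ // 2 ≤ j} where
  toFun k := ⟨k + 2, by omega⟩
  invFun j := j.1 - 2
  left_inv k := by simp
  right_inv j := by
    ext
    have := j.2
    simp
    omega

lemma gammaPDF_term_eq {β t : ℝ} (hβ : 0 < β) (ht : 0 ≤ t) (k : ℕ) :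
    gammaPDF (((k + 2 : ℕ)) : ℝ) β t
      = ENNReal.ofReal ((β * Real.exp (-(β * t))) * ((β * t) ^ (k+1) / ((k+1)! : ℝ))) := by
  rw [gammaPDF_of_nonneg ht]
  congr 1
  have h1 : β ^ (((k + 2 : ℕ)) : ℝ) = β ^ (k + 2) := Real.rpow_natCast β (k+2)
  have h2 : Real.Gamma (((k + 2 : ℕ)) : ℝ) = ((k+1)! : ℝ) := by
    rw [show (((k + 2 : ℕ)) : ℝ) = ((k + 1 : ℕ) : ℝ) + 1 by push_cast; ring,
      Real.Gamma_nat_eq_factorial]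
  have h3 : t ^ ((((k + 2 : ℕ)) : ℝ) - 1) = t ^ (k + 1) := by
    rw [show ((((k + 2 : ℕ)) : ℝ) - 1) = (((k + 1 : ℕ)) : ℝ) by push_cast; ring,
      Real.rpow_natCast]
  rw [h1, h2, h3, mul_pow]
  ring

lemma gammaPDF_tsum_le {β t x : ℝ} (hβ : 0 < β) (ht : 0 ≤ t) (htx : t ≤ x) :
    ∑' j : {j : ℕ // 2 ≤ j}, gammaPDF ((j : ℕ) : ℝ) β t ≤ ENNReal.ofReal (β ^ 2 * x) := by
  rw [← Equiv.tsum_eq eqv (fun j : {j : ℕ // 2 ≤ j} => gammaPDF ((j : ℕ) : ℝ) β t)]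
  have hterm : ∀ k : ℕ, gammaPDF (((eqv k : {j : ℕ // 2 ≤ j}) : ℕ) : ℝ) β t
      = ENNReal.ofReal ((β * Real.exp (-(β * t))) * ((β * t) ^ (k+1) / ((k+1)! : ℝ))) :=
    fun k => gammaPDF_term_eq hβ ht k
  simp_rw [hterm]
  have hsum : Summable (fun k : ℕ =>
      (β * Real.exp (-(β * t))) * ((β * t) ^ (k+1) / ((k+1)! : ℝ))) :=
    (summable_shift (β * t)).mul_left _
  rw [← ENNReal.ofReal_tsum_of_nonneg (fun k => by positivity) hsum]
  apply ENNReal.ofReal_le_ofReal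
  rw [tsum_mul_left, tsum_exp_shift (β * t)]
  have hle : 1 - Real.exp (-(β * t)) ≤ β * t := by
    nlinarith [Real.add_one_le_exp (-(β * t))]
  have hpos : (0:ℝ) < Real.exp (-(β * t)) := Real.exp_pos _
  have hid : Real.exp (-(β * t)) * Real.exp (β * t) = 1 := by
    rw [← Real.exp_add]; simp
  nlinarith [mul_nonneg hβ.le ht, sq_nonneg β, hβ.le,
    mul_le_mul_of_nonneg_left hle hβ.le,
    mul_le_mul_of_nonneg_left htx (mul_nonneg hβ.le hβ.le)]

lemma tsum_gammaMeasure_Iic_le {β : ℝ} (hβ : 0 < β) (x : ℝ) :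
    ∑' j : {j : ℕ // 2 ≤ j}, gammaMeasure ((j : ℕ) : ℝ) β (Iic x)
      ≤ ENNReal.ofReal (β ^ 2 * x ^ 2) := by
  rcases le_or_gt 0 x with hx | hx
  · have hIic : ∀ j : {j : ℕ // 2 ≤ j}, gammaMeasure ((j : ℕ) : ℝ) β (Iic x)
        = ∫⁻ t in Icc 0 x, gammaPDF ((j : ℕ) : ℝ) β t := by
      intro j
      rw [gammaMeasure, withDensity_apply _ measurableSet_Iic,
        lintegral_Iic_eq_lintegral_Iio_add_Icc _ hx,
        lintegral_gammaPDF_of_nonpos le_rfl, zero_add]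
    simp_rw [hIic]
    rw [← lintegral_tsum (μ := volume.restrict (Icc 0 x))
      (f := fun (j : {j : ℕ // 2 ≤ j}) (t : ℝ) => gammaPDF ((j : ℕ) : ℝ) β t)
      (fun j => ((measurable_gammaPDFReal _ _).ennreal_ofReal :
        Measurable (gammaPDF ((j : ℕ) : ℝ) β)).aemeasurable)]
    calc ∫⁻ t in Icc 0 x, ∑' j : {j : ℕ // 2 ≤ j}, gammaPDF ((j : ℕ) : ℝ) β t
        ≤ ∫⁻ _ in Icc 0 x, ENNReal.ofReal (β ^ 2 * x) :=
          setLIntegral_mono measurable_const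
            (fun t ht => gammaPDF_tsum_le hβ ht.1 ht.2)
      _ = ENNReal.ofReal (β ^ 2 * x) * volume (Icc 0 x) := setLIntegral_const _ _
      _ ≤ ENNReal.ofReal (β ^ 2 * x ^ 2) := by
          rw [Real.volume_Icc, ← ENNReal.ofReal_mul (by positivity)]
          apply ENNReal.ofReal_le_ofReal
          nlinarith
  · have hzero : ∀ j : {j : ℕ // 2 ≤ j}, gammaMeasure ((j : ℕ) : ℝ) β (Iic x) = 0 := by
      intro j
      rw [gammaMeasure, withDensity_apply _ measurableSet_Iic]
      refine le_antisymm ?_ zero_le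
      rw [← lintegral_gammaPDF_of_nonpos (le_refl (0:ℝ)) (a := ((j : ℕ) : ℝ)) (r := β)]
      exact lintegral_mono_set (fun t ht => lt_of_le_of_lt ht hx)
    simp [hzero]

end Aux

section Main
open Real Set
open scoped Nat

/-- For each integer `j ≥ 2`, let `X_j` be a centered Gaussian random
variable of variance `s > 0` and `γ_j` an independent Gamma(`j`, `2λ`) random variable
(`λ > 0`); no joint independence across different `j` is assumed. Then
`∑_{j≥2} P(X_j ≥ γ_j) ≤ 100 λ² s + λ √s`. -/
theorem stmt18
    {Ω : Type*} {m0 : MeasurableSpace Ω} {μ : Measure Ω} [IsProbabilityMeasure μ]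
    (s : ℝ≥0) (hs : 0 < s) (r : ℝ) (hr : 0 < r)
    (X γ : ℕ → Ω → ℝ)
    (hX : ∀ j, 2 ≤ j → Measurable (X j)) (hγ : ∀ j, 2 ≤ j → Measurable (γ j))
    (hXd : ∀ j, 2 ≤ j → Measure.map (X j) μ = gaussianReal 0 s)
    (hγd : ∀ j, 2 ≤ j → Measure.map (γ j) μ = gammaMeasure (j : ℝ) (2 * r))
    (hind : ∀ j, 2 ≤ j → IndepFun (X j) (γ j) μ) :
    ∑' j : {j : ℕ // 2 ≤ j}, μ {ω | γ (j : ℕ) ω ≤ X (j : ℕ) ω} ≤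
      ENNReal.ofReal (100 * r ^ 2 * s + r * Real.sqrt s) := by
  have hβ : (0:ℝ) < 2 * r := by linarith
  have key : ∀ j : {j : ℕ // 2 ≤ j}, μ {ω | γ (j : ℕ) ω ≤ X (j : ℕ) ω}
      = ∫⁻ x, gammaMeasure ((j : ℕ) : ℝ) (2 * r) (Iic x) ∂(gaussianReal 0 s) := by
    rintro ⟨j, hj⟩
    have hXm := hX j hj
    have hγm := hγ j hj
    have hmap : Measure.map (fun ω => (X j ω, γ j ω)) μ
        = (gaussianReal 0 s).prod (gammaMeasure (j : ℝ) (2 * r)) := by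
      rw [← hXd j hj, ← hγd j hj]
      exact (indepFun_iff_map_prod_eq_prod_map_map hXm.aemeasurable
        hγm.aemeasurable).mp (hind j hj)
    have hset : MeasurableSet {p : ℝ × ℝ | p.2 ≤ p.1} :=
      measurableSet_le measurable_snd measurable_fst
    haveI : IsProbabilityMeasure (gammaMeasure (j : ℝ) (2 * r)) :=
      isProbabilityMeasure_gammaMeasure (by exact_mod_cast (by omega : 0 < j)) hβ
    have hpre : {ω | γ j ω ≤ X j ω}
        = (fun ω => (X j ω, γ j ω)) ⁻¹' {p : ℝ × ℝ | p.2 ≤ p.1} := rfl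
    rw [hpre, ← Measure.map_apply (hXm.prodMk hγm) hset, hmap,
      Measure.prod_apply hset]
    rfl
  calc ∑' j : {j : ℕ // 2 ≤ j}, μ {ω | γ (j : ℕ) ω ≤ X (j : ℕ) ω}
      = ∑' j : {j : ℕ // 2 ≤ j},
          ∫⁻ x, gammaMeasure ((j : ℕ) : ℝ) (2 * r) (Iic x) ∂(gaussianReal 0 s) :=
        tsum_congr key
    _ = ∫⁻ x, ∑' j : {j : ℕ // 2 ≤ j},
          gammaMeasure ((j : ℕ) : ℝ) (2 * r) (Iic x) ∂(gaussianReal 0 s) := by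
        refine (lintegral_tsum fun j => Measurable.aemeasurable ?_).symm
        exact Monotone.measurable
          (fun a b hab => measure_mono (Iic_subset_Iic.mpr hab))
    _ ≤ ∫⁻ x, ENNReal.ofReal ((2 * r) ^ 2 * x ^ 2) ∂(gaussianReal 0 s) :=
        lintegral_mono fun x => tsum_gammaMeasure_Iic_le hβ x
    _ = ENNReal.ofReal ((2 * r) ^ 2) * ∫⁻ x, ENNReal.ofReal (x ^ 2)
          ∂(gaussianReal 0 s) := by
        simp_rw [ENNReal.ofReal_mul (by positivity : (0:ℝ) ≤ (2 * r) ^ 2)]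
        rw [lintegral_const_mul _ (measurable_id'.pow_const 2).ennreal_ofReal]
    _ = ENNReal.ofReal ((2 * r) ^ 2) * ENNReal.ofReal s := by
        rw [lintegral_sq_gaussian s hs]
    _ ≤ ENNReal.ofReal (100 * r ^ 2 * s + r * Real.sqrt s) := by
        rw [← ENNReal.ofReal_mul (by positivity)]
        apply ENNReal.ofReal_le_ofReal
        have h1 : (0:ℝ) ≤ (s:ℝ) := s.2
        have h2 : (0:ℝ) ≤ Real.sqrt s := Real.sqrt_nonneg _
        nlinarith

end Main
end
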